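/- arXiv:1306.0630 — 5 statements merged into one kernel-verified Lean document; each statement's English description precedes it below -/
import Mathlib

section
/- For any non-constant boolean function f on n variables, liminf_{k→∞} C(f^(k))^{1/k} = Ĉ(f), where Ĉ(f) is the maximum over all f-compatible assignment selectors α of the minimum over all witness pairs for α of the spectral radius of the associated profile matrix. -/
open Filter

namespace BS

variable {I : Type*} [Fintype I] [DecidableEq I]

/-- Flip the bits of `x` indexed by `B`. -/
def flipSet (x : I → Bool) (B : Finset I) : I → Bool :=
  fun i => if i ∈ B then !(x i) else x i

/-- `B` is a block of `f` at `x`. -/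
def IsBlock (f : (I → Bool) → Bool) (x : I → Bool) (B : Finset I) : Prop :=
  f (flipSet x B) ≠ f x

/-- Block sensitivity of `f` at `x`: the maximum number of pairwise disjoint blocks. -/
noncomputable def bsAt (f : (I → Bool) → Bool) (x : I → Bool) : ℕ :=
  sSup {k | ∃ B : Fin k → Finset I, (∀ t, IsBlock f x (B t)) ∧
    ∀ t t', t ≠ t' → Disjoint (B t) (B t')}

/-- Block sensitivity of `f`. -/
noncomputable def bs (f : (I → Bool) → Bool) : ℕ :=
  sSup {k | ∃ x, k = bsAt f x}

/-- `b`-block sensitivity of `f`. -/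
noncomputable def bsb (f : (I → Bool) → Bool) (b : Bool) : ℕ :=
  sSup {k | ∃ x, f x = b ∧ k = bsAt f x}

/-- `M`-fold block sensitivity of `f` at `x`. -/
noncomputable def bsMAt (f : (I → Bool) → Bool) (M : ℕ) (x : I → Bool) : ℕ :=
  sSup {k | ∃ B : Fin k → Finset I, (∀ t, IsBlock f x (B t)) ∧
    ∀ i : I, (Finset.univ.filter (fun t => i ∈ B t)).card ≤ M}

/-- `M`-fold `b`-block sensitivity of `f`. -/
noncomputable def bsMb (f : (I → Bool) → Bool) (M : ℕ) (b : Bool) : ℕ :=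
  sSup {k | ∃ x, f x = b ∧ k = bsMAt f M x}

/-- Fractional block sensitivity of `f` at `x`. -/
noncomputable def fbsAt (f : (I → Bool) → Bool) (x : I → Bool) : ℝ :=
  sSup {s | ∃ lam : Finset I → ℝ, (∀ B, 0 ≤ lam B) ∧
    (∀ B, ¬ IsBlock f x B → lam B = 0) ∧
    (∀ i : I, ∑ B ∈ Finset.univ.filter (fun B : Finset I => i ∈ B), lam B ≤ 1) ∧
    s = ∑ B : Finset I, lam B}

/-- Fractional block sensitivity of `f`. -/
noncomputable def fbs (f : (I → Bool) → Bool) : ℝ :=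
  sSup {s | ∃ x, s = fbsAt f x}

/-- Fractional `b`-block sensitivity of `f`. -/
noncomputable def fbsb (f : (I → Bool) → Bool) (b : Bool) : ℝ :=
  sSup {s | ∃ x, f x = b ∧ s = fbsAt f x}

/-- Certificate complexity of `f` at `x`. -/
noncomputable def CAt (f : (I → Bool) → Bool) (x : I → Bool) : ℕ :=
  sInf {k | ∃ S : Finset I, (∀ B, IsBlock f x B → (S ∩ B).Nonempty) ∧ k = S.card}

/-- Certificate complexity of `f`. -/
noncomputable def Cm (f : (I → Bool) → Bool) : ℕ :=
  sSup {k | ∃ x, k = CAt f x}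

/-- `b`-certificate complexity of `f`. -/
noncomputable def Cb (f : (I → Bool) → Bool) (b : Bool) : ℕ :=
  sSup {k | ∃ x, f x = b ∧ k = CAt f x}

/-- Fractional certificate complexity of `f` at `x`. -/
noncomputable def fCAt (f : (I → Bool) → Bool) (x : I → Bool) : ℝ :=
  sInf {s | ∃ w : I → ℝ, (∀ i, 0 ≤ w i ∧ w i ≤ 1) ∧
    (∀ B, IsBlock f x B → 1 ≤ ∑ i ∈ B, w i) ∧ s = ∑ i, w i}

/-- Fractional certificate complexity of `f`. -/
noncomputable def fC (f : (I → Bool) → Bool) : ℝ :=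
  sSup {s | ∃ x, s = fCAt f x}

/-- Composition `f ∘ g` of boolean functions. -/
def comp {J : Type*} [Fintype J] [DecidableEq J]
    (f : (I → Bool) → Bool) (g : (J → Bool) → Bool) :
    ((I × J) → Bool) → Bool :=
  fun x => f (fun i => g (fun j => x (i, j)))

/-- `k`-fold iterated composition `f^(k)` of an `n`-variate boolean function; the
variables of `f^(k)` are indexed by strings in `Fin k → Fin n`.  `f^(0)` is the
univariate identity function. -/
def iter {n : ℕ} (f : (Fin n → Bool) → Bool) :
    (k : ℕ) → ((Fin k → Fin n) → Bool) → Bool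
  | 0, x => x (fun i => i.elim0)
  | k + 1, x => f (fun i => iter f k (fun s => x (Fin.cons i s)))

/-- Spectral radius of a real square matrix: the maximum of `|μ|` over the complex
eigenvalues `μ` of the matrix. -/
noncomputable def specRad {m : Type*} [Fintype m] [DecidableEq m]
    (A : Matrix m m ℝ) : ℝ :=
  sSup {r | ∃ μ : ℂ, μ ∈ spectrum ℂ (A.map Complex.ofReal) ∧ r = ‖μ‖}

end BS

namespace BS

/-- Profile matrix of an assignment selector `α` together with a witness pair `w`:
the `(s,t)` entry is the number of indices `i ∈ w s` with `α s i = t`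
(rows/columns indexed by `Bool`, with `false` corresponding to the 0-input). -/
noncomputable def profile {I : Type*} [Fintype I] [DecidableEq I]
    (α : Bool → I → Bool) (w : Bool → Finset I) : Matrix Bool Bool ℝ :=
  fun s t => (((w s).filter (fun i => α s i = t)).card : ℝ)

/-- `Ĉ(f)`: the maximum, over all `f`-compatible assignment selectors `α`, of the
minimum, over all witness pairs `w` for `α`, of the spectral radius of the
associated profile matrix. -/
noncomputable def hatC {I : Type*} [Fintype I] [DecidableEq I]
    (f : (I → Bool) → Bool) : ℝ :=
  sSup {r | ∃ α : Bool → I → Bool, f (α false) = false ∧ f (α true) = true ∧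
    r = sInf {s | ∃ w : Bool → Finset I,
      (∀ b B, IsBlock f (α b) B → ((w b) ∩ B).Nonempty) ∧
      s = specRad (profile α w)}}

end BS

set_option linter.unusedSectionVars false
namespace BS
section Cert
variable {I : Type*} [Fintype I] [DecidableEq I]

/-- Certificate predicate. -/
def IsCert (f : (I → Bool) → Bool) (x : I → Bool) (S : Finset I) : Prop :=
  ∀ B, IsBlock f x B → (S ∩ B).Nonempty

lemma flipSet_diff (x y : I → Bool) :
    flipSet x (Finset.univ.filter (fun i => y i ≠ x i)) = y := by
  funext i
  simp only [flipSet, Finset.mem_filter, Finset.mem_univ, true_and]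
  by_cases h : y i = x i
  · simp [h]
  · simp only [ne_eq, h, not_false_iff, if_true]
    cases hx : x i <;> cases hy : y i <;> simp_all

lemma isCert_iff {f : (I → Bool) → Bool} {x : I → Bool} {S : Finset I} :
    IsCert f x S ↔ ∀ y, (∀ i ∈ S, y i = x i) → f y = f x := by
  constructor
  · intro hC y hagree
    by_contra hne
    have hB : IsBlock f x (Finset.univ.filter (fun i => y i ≠ x i)) := by
      unfold IsBlock
      rw [flipSet_diff]; exact hne
    obtain ⟨i, hi⟩ := hC _ hB
    rw [Finset.mem_inter, Finset.mem_filter] at hi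
    exact hi.2.2 (hagree i hi.1)
  · intro h B hB
    by_contra hemp
    rw [Finset.not_nonempty_iff_eq_empty] at hemp
    apply hB
    apply h
    intro i hi
    have : i ∉ B := by
      intro hiB
      have : i ∈ S ∩ B := Finset.mem_inter.2 ⟨hi, hiB⟩
      simp [hemp] at this
    simp [flipSet, this]

lemma isBlock_nonempty {f : (I → Bool) → Bool} {x : I → Bool} {B : Finset I}
    (h : IsBlock f x B) : B.Nonempty := by
  rcases Finset.eq_empty_or_nonempty B with rfl | hne
  · exfalso
    have hfl : flipSet x (∅ : Finset I) = x := by funext i; simp [flipSet]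
    exact h (by rw [hfl])
  · exact hne

lemma isCert_univ (f : (I → Bool) → Bool) (x : I → Bool) :
    IsCert f x (Finset.univ : Finset I) := by
  intro B hB
  rw [Finset.univ_inter]
  exact isBlock_nonempty hB

lemma CAt_set_nonempty (f : (I → Bool) → Bool) (x : I → Bool) :
    {k | ∃ S : Finset I, (∀ B, IsBlock f x B → (S ∩ B).Nonempty) ∧ k = S.card}.Nonempty :=
  ⟨(Finset.univ : Finset I).card, Finset.univ, isCert_univ f x, rfl⟩

lemma exists_min_cert (f : (I → Bool) → Bool) (x : I → Bool) :
    ∃ S : Finset I, IsCert f x S ∧ S.card = CAt f x := by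
  have := Nat.sInf_mem (CAt_set_nonempty f x)
  obtain ⟨S, hS, hcard⟩ := this
  exact ⟨S, hS, hcard.symm⟩

lemma CAt_le {f : (I → Bool) → Bool} {x : I → Bool} {S : Finset I}
    (hS : IsCert f x S) : CAt f x ≤ S.card :=
  Nat.sInf_le ⟨S, hS, rfl⟩

lemma one_le_CAt {f : (I → Bool) → Bool} {x : I → Bool}
    (h : ∃ z, f z ≠ f x) : 1 ≤ CAt f x := by
  obtain ⟨z, hz⟩ := h
  obtain ⟨S, hS, hcard⟩ := exists_min_cert f x
  have hB : IsBlock f x (Finset.univ.filter (fun i => z i ≠ x i)) := by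
    unfold IsBlock; rw [flipSet_diff]; exact hz
  obtain ⟨i, hi⟩ := hS _ hB
  rw [← hcard]
  exact Finset.card_pos.2 ⟨i, (Finset.mem_inter.1 hi).1⟩

lemma CAt_le_card (f : (I → Bool) → Bool) (x : I → Bool) :
    CAt f x ≤ Fintype.card I :=
  le_trans (CAt_le (isCert_univ f x)) (le_of_eq (Finset.card_univ))

lemma Cm_bddAbove (f : (I → Bool) → Bool) :
    BddAbove {k | ∃ x, k = CAt f x} := by
  refine ⟨Fintype.card I, ?_⟩
  rintro k ⟨x, rfl⟩
  exact CAt_le_card f x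

lemma CAt_le_Cm (f : (I → Bool) → Bool) (x : I → Bool) :
    CAt f x ≤ Cm f :=
  le_csSup (Cm_bddAbove f) ⟨x, rfl⟩

lemma exists_Cm (f : (I → Bool) → Bool) [Nonempty I] :
    ∃ x, Cm f = CAt f x := by
  have h : {k | ∃ x : I → Bool, k = CAt f x}.Nonempty := by
    refine ⟨CAt f (fun _ => false), ⟨_, rfl⟩⟩
  exact Nat.sSup_mem h (Cm_bddAbove f)

end Cert
end BS
namespace BS
section Comp
variable {n : ℕ}

/-- Restriction of an input of `f^(k+1)` to the `i`-th block. -/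
def restr {k : ℕ} (x : (Fin (k+1) → Fin n) → Bool) (i : Fin n) :
    (Fin k → Fin n) → Bool := fun s => x (Fin.cons i s)

/-- Non-dependent `Fin.cons` for strings. -/
def consMap {k : ℕ} (i : Fin n) (s : Fin k → Fin n) : Fin (k+1) → Fin n := Fin.cons i s

lemma consMap_zero {k : ℕ} (i : Fin n) (s : Fin k → Fin n) : consMap i s 0 = i :=
  Fin.cons_zero (α := fun _ => Fin n) i s

lemma consMap_tail {k : ℕ} (i : Fin n) (s : Fin k → Fin n) :
    Fin.tail (consMap i s) = s := Fin.tail_cons (α := fun _ => Fin n) i s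

lemma consMap_self_tail {k : ℕ} (s' : Fin (k+1) → Fin n) :
    consMap (s' 0) (Fin.tail s') = s' := Fin.cons_self_tail (α := fun _ => Fin n) s'

lemma consMap_injective {k : ℕ} (i : Fin n) : Function.Injective (consMap (k := k) i) := by
  intro s s' h
  have := congrArg Fin.tail h
  rwa [consMap_tail, consMap_tail] at this

lemma restr_apply {k : ℕ} (x : (Fin (k+1) → Fin n) → Bool) (i : Fin n) (s : Fin k → Fin n) :
    restr x i s = x (consMap i s) := rfl

lemma iter_succ (f : (Fin n → Bool) → Bool) (k : ℕ) (x : (Fin (k+1) → Fin n) → Bool) :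
    iter f (k+1) x = f (fun i => iter f k (restr x i)) := rfl

open Classical in
/-- All certificates (hitting sets) of `f` at `y`, as a finset. -/
noncomputable def certSet (f : (Fin n → Bool) → Bool) (y : Fin n → Bool) : Finset (Finset (Fin n)) :=
  Finset.univ.filter (fun w => ∀ B, IsBlock f y B → (w ∩ B).Nonempty)

lemma mem_certSet {f : (Fin n → Bool) → Bool} {y : Fin n → Bool} {w : Finset (Fin n)} :
    w ∈ certSet f y ↔ IsCert f y w := by
  simp [certSet, IsCert, Finset.mem_filter]

lemma certSet_nonempty (f : (Fin n → Bool) → Bool) (y : Fin n → Bool) :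
    (certSet f y).Nonempty :=
  ⟨Finset.univ, mem_certSet.2 (isCert_univ f y)⟩

lemma certSet_mem_nonempty {f : (Fin n → Bool) → Bool} {y : Fin n → Bool} {w : Finset (Fin n)}
    (hf : ∃ z, f z ≠ f y) (hw : w ∈ certSet f y) : w.Nonempty := by
  obtain ⟨z, hz⟩ := hf
  have hB : IsBlock f y (Finset.univ.filter (fun i => z i ≠ y i)) := by
    unfold IsBlock; rw [flipSet_diff]; exact hz
  obtain ⟨i, hi⟩ := (mem_certSet.1 hw) _ hB
  exact ⟨i, (Finset.mem_inter.1 hi).1⟩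

/-- Inputs of `f` with value `b`. -/
def inputSet (f : (Fin n → Bool) → Bool) (b : Bool) : Finset (Fin n → Bool) :=
  Finset.univ.filter (fun y => f y = b)

lemma mem_inputSet {f : (Fin n → Bool) → Bool} {b : Bool} {y : Fin n → Bool} :
    y ∈ inputSet f b ↔ f y = b := by simp [inputSet]

/-- Row value: `∑_{i ∈ w} v (y i)`. -/
noncomputable def rv (y : Fin n → Bool) (w : Finset (Fin n)) (v : Bool → ℝ) : ℝ :=
  ∑ i ∈ w, v (y i)

/-- The max-min Bellman operator. -/
noncomputable def Gop (f : (Fin n → Bool) → Bool)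
    (hb : ∀ b : Bool, (inputSet f b).Nonempty) (v : Bool → ℝ) (b : Bool) : ℝ :=
  (inputSet f b).sup' (hb b)
    (fun y => (certSet f y).inf' (certSet_nonempty f y) (fun w => rv y w v))

/-- Iterates of the Bellman operator starting from the all-ones vector. -/
noncomputable def vIter (f : (Fin n → Bool) → Bool)
    (hb : ∀ b : Bool, (inputSet f b).Nonempty) : ℕ → Bool → ℝ
  | 0 => fun _ => 1
  | (k+1) => Gop f hb (vIter f hb k)

section FixedF
variable (f : (Fin n → Bool) → Bool) (hb : ∀ b : Bool, (inputSet f b).Nonempty)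

include hb in
lemma iter_exists_value : ∀ k : ℕ, ∀ b : Bool, ∃ x, iter f k x = b := by
  intro k
  induction k with
  | zero => intro b; exact ⟨fun _ => b, rfl⟩
  | succ k ih =>
    intro b
    obtain ⟨y, hy⟩ := hb b
    rw [mem_inputSet] at hy
    choose z hz using ih
    refine ⟨fun s' => z (y (s' 0)) (Fin.tail s'), ?_⟩
    rw [iter_succ]
    have : (fun i => iter f k (restr (fun s' => z (y (s' 0)) (Fin.tail s')) i)) = y := by
      funext i
      have hres : restr (fun s' => z (y (s' 0)) (Fin.tail s')) i = z (y i) := by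
        funext s
        show z (y (consMap i s 0)) (Fin.tail (consMap i s)) = z (y i) s
        rw [consMap_zero, consMap_tail]
      rw [hres, hz]
    rw [this, hy]

include hb in
lemma iter_nonconst (k : ℕ) (x : (Fin k → Fin n) → Bool) :
    ∃ z, iter f k z ≠ iter f k x := by
  obtain ⟨z, hz⟩ := iter_exists_value f hb k (!(iter f k x))
  exact ⟨z, by rw [hz]; simp⟩

/-- Upper glue bound: for every certificate `w` of `f` at the top values. -/
lemma CAt_succ_le (k : ℕ) (x : (Fin (k+1) → Fin n) → Bool)
    {w : Finset (Fin n)} (hw : IsCert f (fun i => iter f k (restr x i)) w) :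
    CAt (iter f (k+1)) x ≤ ∑ i ∈ w, CAt (iter f k) (restr x i) := by
  classical
  -- choose minimal certificates for each block
  choose T hT hTcard using fun i => exists_min_cert (iter f k) (restr x i)
  set S : Finset (Fin (k+1) → Fin n) :=
    w.biUnion (fun i => (T i).image (consMap i)) with hS
  have hdisj : ∀ i ∈ w, ∀ j ∈ w, i ≠ j →
      Disjoint ((T i).image (consMap i)) ((T j).image (consMap j)) := by
    intro i _ j _ hij
    rw [Finset.disjoint_left]
    rintro a ha hb
    obtain ⟨s, _, rfl⟩ := Finset.mem_image.1 ha
    obtain ⟨s', _, he⟩ := Finset.mem_image.1 hb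
    apply hij
    have := congrArg (fun g : Fin (k+1) → Fin n => g 0) he
    simpa [consMap_zero] using this.symm
  have hcard : S.card = ∑ i ∈ w, (T i).card := by
    rw [hS, Finset.card_biUnion hdisj]
    congr 1; funext i
    exact Finset.card_image_of_injective _ (consMap_injective i)
  have hcert : IsCert (iter f (k+1)) x S := by
    rw [isCert_iff]
    intro x' hagree
    rw [iter_succ, iter_succ]
    have hblocks : ∀ i ∈ w, iter f k (restr x' i) = iter f k (restr x i) := by
      intro i hi
      have : ∀ s ∈ T i, restr x' i s = restr x i s := by
        intro s hs
        apply hagree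
        rw [hS]
        exact Finset.mem_biUnion.2 ⟨i, hi, Finset.mem_image.2 ⟨s, hs, rfl⟩⟩
      exact (isCert_iff.1 (hT i)) _ this
    exact (isCert_iff.1 hw) _ (fun i hi => hblocks i hi)
  calc CAt (iter f (k+1)) x ≤ S.card := CAt_le hcert
    _ = ∑ i ∈ w, (T i).card := hcard
    _ = ∑ i ∈ w, CAt (iter f k) (restr x i) := by
        apply Finset.sum_congr rfl; intro i _; rw [hTcard]

/-- L1: upper bound on certificate complexity of iterates by the Bellman iterates. -/
lemma CAt_iter_le_vIter : ∀ k : ℕ, ∀ x, (CAt (iter f k) x : ℝ) ≤ vIter f hb k (iter f k x) := by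
  intro k
  induction k with
  | zero =>
    intro x
    have h1 : CAt (iter f 0) x ≤ 1 := by
      have : IsCert (iter f 0) x {fun i => i.elim0} := by
        rw [isCert_iff]
        intro y hy
        show y _ = x _
        exact hy _ (Finset.mem_singleton_self _)
      simpa using CAt_le this
    calc (CAt (iter f 0) x : ℝ) ≤ 1 := by exact_mod_cast h1
      _ = vIter f hb 0 (iter f 0 x) := rfl
  | succ k ih =>
    intro x
    set y : Fin n → Bool := fun i => iter f k (restr x i) with hy
    have hval : iter f (k+1) x = f y := iter_succ f k x
    have hymem : y ∈ inputSet f (f y) := mem_inputSet.2 rfl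
    show (CAt (iter f (k+1)) x : ℝ) ≤ Gop f hb (vIter f hb k) (iter f (k+1) x)
    rw [hval]
    refine le_trans ?_ (Finset.le_sup' _ hymem)
    refine Finset.le_inf' _ _ ?_
    intro w hw
    have h1 : (CAt (iter f (k+1)) x : ℝ) ≤ ∑ i ∈ w, (CAt (iter f k) (restr x i) : ℝ) := by
      have := CAt_succ_le f k x (mem_certSet.1 hw)
      exact_mod_cast this
    refine le_trans h1 ?_
    unfold rv
    apply Finset.sum_le_sum
    intro i _
    exact ih (restr x i)

/-- L2: lower bound via recursively glued hard inputs. -/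
lemma exists_hard_input : ∀ k : ℕ, ∀ b : Bool,
    ∃ x, iter f k x = b ∧ vIter f hb k b ≤ (CAt (iter f k) x : ℝ) := by
  intro k
  induction k with
  | zero =>
    intro b
    refine ⟨fun _ => b, rfl, ?_⟩
    have : 1 ≤ CAt (iter f 0) (fun _ => b) :=
      one_le_CAt (iter_nonconst f hb 0 _)
    calc vIter f hb 0 b = 1 := rfl
      _ ≤ (CAt (iter f 0) (fun _ => b) : ℝ) := by exact_mod_cast this
  | succ k ih =>
    intro b
    -- choose the maximizing top input y
    obtain ⟨y, hymem, hysup⟩ := Finset.exists_mem_eq_sup' (hb b)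
      (fun y => (certSet f y).inf' (certSet_nonempty f y) (fun w => rv y w (vIter f hb k)))
    rw [mem_inputSet] at hymem
    choose z hz hzC using ih
    set x : (Fin (k+1) → Fin n) → Bool := fun s' => z (y (s' 0)) (Fin.tail s') with hx
    have hres : ∀ i, restr x i = z (y i) := by
      intro i; funext s
      show z (y (consMap i s 0)) (Fin.tail (consMap i s)) = z (y i) s
      rw [consMap_zero, consMap_tail]
    have hxval : iter f (k+1) x = b := by
      rw [iter_succ]
      have : (fun i => iter f k (restr x i)) = y := by
        funext i; rw [hres, hz]
      rw [this, hymem]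
    refine ⟨x, hxval, ?_⟩
    -- take a minimum certificate S of the composed function at x
    obtain ⟨S, hS, hScard⟩ := exists_min_cert (iter f (k+1)) x
    -- project it
    set Si : Fin n → Finset (Fin k → Fin n) :=
      fun i => Finset.univ.filter (fun s => consMap i s ∈ S) with hSi
    classical
    set w : Finset (Fin n) :=
      Finset.univ.filter (fun i => IsCert (iter f k) (restr x i) (Si i)) with hwdef
    have hwcert : w ∈ certSet f y := by
      rw [mem_certSet]
      intro B hB
      by_contra hemp
      rw [Finset.not_nonempty_iff_eq_empty] at hemp
      -- for each i ∈ B the projection is not a certificate: get a flipping input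
      have hnc : ∀ i ∈ B, ∃ zi, (∀ s ∈ Si i, zi s = restr x i s) ∧
          iter f k zi ≠ iter f k (restr x i) := by
        intro i hiB
        have hiw : i ∉ w := by
          intro hiw
          have : i ∈ w ∩ B := Finset.mem_inter.2 ⟨hiw, hiB⟩
          simp [hemp] at this
        rw [hwdef, Finset.mem_filter] at hiw
        push_neg at hiw
        have := hiw (Finset.mem_univ i)
        rw [isCert_iff] at this
        push_neg at this
        obtain ⟨zi, h1, h2⟩ := this
        exact ⟨zi, h1, h2⟩
      choose zi hzi1 hzi2 using hnc
      -- build the flipped composed input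
      set x' : (Fin (k+1) → Fin n) → Bool := fun s' =>
        if h : s' 0 ∈ B then zi (s' 0) h (Fin.tail s') else x s' with hx'
      have hagree : ∀ s' ∈ S, x' s' = x s' := by
        intro s' hs'
        rw [hx']
        by_cases h : s' 0 ∈ B
        · simp only [h, dif_pos]
          have htail : Fin.tail s' ∈ Si (s' 0) := by
            rw [hSi]
            simp only [Finset.mem_filter, Finset.mem_univ, true_and]
            rw [consMap_self_tail]; exact hs'
          have := hzi1 (s' 0) h (Fin.tail s') htail
          rw [this]
          show x (consMap (s' 0) (Fin.tail s')) = x s'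
          rw [consMap_self_tail]
        · simp only [h, dif_neg, not_false_iff]
      have hsame : iter f (k+1) x' = iter f (k+1) x := (isCert_iff.1 hS) x' hagree
      -- but the top vector is flipped by B
      have hrx' : ∀ i, iter f k (restr x' i) = flipSet y B i := by
        intro i
        by_cases h : i ∈ B
        · have : restr x' i = zi i h := by
            funext s
            show x' (Fin.cons i s) = zi i h s
            rw [hx']
            simp only [Fin.cons_zero, h, dif_pos, Fin.tail_cons]
          rw [this]
          have h2 := hzi2 i h
          rw [hres, hz] at h2
          have h3 : iter f k (zi i h) = !(y i) := by
            revert h2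
            cases hzi : iter f k (zi i h) <;> cases hy2 : y i <;> simp_all
          rw [h3, flipSet]
          simp [h]
        · have : restr x' i = restr x i := by
            funext s
            show x' (Fin.cons i s) = x (Fin.cons i s)
            rw [hx']
            simp only [Fin.cons_zero, h, dif_neg, not_false_iff]
          rw [this, hres, hz, flipSet]
          simp [h]
      have hflip : iter f (k+1) x' = f (flipSet y B) := by
        rw [iter_succ]
        congr 1
        funext i
        exact hrx' i
      apply hB
      calc f (flipSet y B) = iter f (k+1) x' := hflip.symm
        _ = iter f (k+1) x := hsame
        _ = b := hxval
        _ = f y := hymem.symm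
    -- cardinality bound
    have hcard : ∑ i : Fin n, (Si i).card = S.card := by
      have hSeq : S = Finset.univ.biUnion (fun i => (Si i).image (consMap i)) := by
        apply Finset.ext
        intro s'
        constructor
        · intro hs'
          refine Finset.mem_biUnion.2 ⟨s' 0, Finset.mem_univ _, ?_⟩
          refine Finset.mem_image.2 ⟨Fin.tail s', ?_, ?_⟩
          · rw [hSi]
            simp only [Finset.mem_filter, Finset.mem_univ, true_and]
            rw [consMap_self_tail]; exact hs'
          · exact consMap_self_tail s'
        · intro hs'
          obtain ⟨i, _, hs2⟩ := Finset.mem_biUnion.1 hs'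
          obtain ⟨s, hs3, rfl⟩ := Finset.mem_image.1 hs2
          rw [hSi] at hs3
          simpa using hs3
      have hdisj : ∀ i ∈ Finset.univ, ∀ j ∈ Finset.univ, i ≠ j →
          Disjoint ((Si i).image (consMap i)) ((Si j).image (consMap j)) := by
        intro i _ j _ hij
        rw [Finset.disjoint_left]
        rintro a ha hb2
        obtain ⟨s, _, rfl⟩ := Finset.mem_image.1 ha
        obtain ⟨s', _, he⟩ := Finset.mem_image.1 hb2
        apply hij
        have := congrArg (fun g : Fin (k+1) → Fin n => g 0) he
        simpa [consMap_zero] using this.symm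
      rw [hSeq, Finset.card_biUnion hdisj]
      apply Finset.sum_congr rfl
      intro i _
      exact (Finset.card_image_of_injective _ (consMap_injective i)).symm
    -- conclude
    have hlow : rv y w (vIter f hb k) ≤ (S.card : ℝ) := by
      have h1 : rv y w (vIter f hb k) ≤ ∑ i ∈ w, (CAt (iter f k) (z (y i)) : ℝ) := by
        unfold rv
        apply Finset.sum_le_sum
        intro i _
        exact hzC (y i)
      have h2 : ∀ i ∈ w, (CAt (iter f k) (z (y i)) : ℝ) ≤ ((Si i).card : ℝ) := by
        intro i hiw
        rw [hwdef, Finset.mem_filter] at hiw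
        have := hiw.2
        rw [hres] at this
        exact_mod_cast CAt_le this
      have h3 : (∑ i ∈ w, ((Si i).card : ℝ)) ≤ (S.card : ℝ) := by
        rw [← hcard]
        push_cast
        apply Finset.sum_le_sum_of_subset_of_nonneg (Finset.subset_univ w)
        intro i _ _
        positivity
      calc rv y w (vIter f hb k) ≤ ∑ i ∈ w, (CAt (iter f k) (z (y i)) : ℝ) := h1
        _ ≤ ∑ i ∈ w, ((Si i).card : ℝ) := Finset.sum_le_sum h2
        _ ≤ (S.card : ℝ) := h3
    show vIter f hb (k+1) b ≤ (CAt (iter f (k+1)) x : ℝ)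
    have : vIter f hb (k+1) b = (inputSet f b).sup' (hb b)
        (fun y => (certSet f y).inf' (certSet_nonempty f y) (fun w => rv y w (vIter f hb k))) := rfl
    rw [this, hysup]
    calc (certSet f y).inf' (certSet_nonempty f y) (fun w => rv y w (vIter f hb k))
        ≤ rv y w (vIter f hb k) := Finset.inf'_le _ hwcert
      _ ≤ (S.card : ℝ) := hlow
      _ = (CAt (iter f (k+1)) x : ℝ) := by rw [hScard]

end FixedF
end Comp
end BS
namespace BS
section Rho

/-- Explicit Perron root of a 2x2 matrix (rows/cols indexed by `Bool`). -/
noncomputable def rho2 (M : Matrix Bool Bool ℝ) : ℝ :=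
  ((M false false + M true true) +
    Real.sqrt ((M false false - M true true)^2 + 4 * (M false true * M true false))) / 2

variable {M : Matrix Bool Bool ℝ}

lemma rho2_nonneg (hM : ∀ s t, 0 ≤ M s t) : 0 ≤ rho2 M := by
  unfold rho2
  have h1 := hM false false
  have h2 := hM true true
  have h3 := Real.sqrt_nonneg ((M false false - M true true)^2 + 4 * (M false true * M true false))
  linarith

lemma rho2_ge_diag (hM : ∀ s t, 0 ≤ M s t) : M false false ≤ rho2 M ∧ M true true ≤ rho2 M := by
  have h4 : (0:ℝ) ≤ 4 * (M false true * M true false) := by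
    have := hM false true; have := hM true false; positivity
  have hs : |M false false - M true true| ≤
      Real.sqrt ((M false false - M true true)^2 + 4 * (M false true * M true false)) := by
    rw [← Real.sqrt_sq_eq_abs]
    exact Real.sqrt_le_sqrt (by linarith)
  have habs1 : M false false - M true true ≤ |M false false - M true true| := le_abs_self _
  have habs2 : M true true - M false false ≤ |M false false - M true true| := by
    rw [abs_sub_comm]; exact le_abs_self _
  constructor <;> (unfold rho2; linarith)

lemma rho2_ge_sqrt_offdiag (hM : ∀ s t, 0 ≤ M s t) :
    Real.sqrt (M false true * M true false) ≤ rho2 M := by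
  have h1 := hM false false; have h2 := hM true true
  have hbc : (0:ℝ) ≤ M false true * M true false := mul_nonneg (hM false true) (hM true false)
  have hs : Real.sqrt (4 * (M false true * M true false)) ≤
      Real.sqrt ((M false false - M true true)^2 + 4 * (M false true * M true false)) :=
    Real.sqrt_le_sqrt (by nlinarith [sq_nonneg (M false false - M true true)])
  have h4 : Real.sqrt (4 * (M false true * M true false)) =
      2 * Real.sqrt (M false true * M true false) := by
    rw [show (4:ℝ) * (M false true * M true false) = (2:ℝ)^2 * (M false true * M true false) by ring,
      Real.sqrt_mul (by positivity), Real.sqrt_sq (by norm_num)]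
  unfold rho2
  rw [h4] at hs
  linarith

/-- Collatz–Wielandt upper bound: positive super-eigenvector. -/
lemma rho2_le_of_subinv (hM : ∀ s t, 0 ≤ M s t) {u : Bool → ℝ} {lam : ℝ}
    (hu : ∀ b, 0 < u b)
    (h : ∀ s, M s false * u false + M s true * u true ≤ lam * u s) :
    rho2 M ≤ lam := by
  set a := M false false; set bb := M false true; set c := M true false; set d := M true true
  have h0 := h false; have h1 := h true
  have ha : a ≤ lam := by
    have := mul_nonneg (hM false true) (hu true).le
    have hup := hu false
    nlinarith
  have hd : d ≤ lam := by
    have := mul_nonneg (hM true false) (hu false).le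
    have hup := hu true
    nlinarith
  have hprod : bb * c ≤ (lam - a) * (lam - d) := by
    have hb0 := hM false true
    have hc0 := hM true false
    have hu0 := hu false; have hu1 := hu true
    have e1 : bb * u true ≤ (lam - a) * u false := by nlinarith
    have e2 : c * u false ≤ (lam - d) * u true := by nlinarith
    nlinarith [mul_nonneg hb0 hu1.le, mul_nonneg hc0 hu0.le,
      mul_le_mul_of_nonneg_left e2 (sub_nonneg.2 ha),
      mul_le_mul_of_nonneg_right e1 hu1.le]
  have hsq : Real.sqrt ((a - d)^2 + 4 * (bb * c)) ≤ 2 * lam - a - d := by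
    have key : (a - d)^2 + 4 * (bb * c) ≤ (2 * lam - a - d)^2 := by nlinarith
    calc Real.sqrt ((a - d)^2 + 4 * (bb * c)) ≤ Real.sqrt ((2 * lam - a - d)^2) :=
          Real.sqrt_le_sqrt key
      _ = |2 * lam - a - d| := Real.sqrt_sq_eq_abs _
      _ = 2 * lam - a - d := abs_of_nonneg (by linarith)
  unfold rho2
  show (a + d + Real.sqrt ((a - d)^2 + 4 * (bb * c))) / 2 ≤ lam
  linarith

/-- Collatz–Wielandt lower bound: nonnegative sub-eigenvector. -/
lemma le_rho2_of_superinv (hM : ∀ s t, 0 ≤ M s t) {u : Bool → ℝ} {lam : ℝ}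
    (hu : ∀ b, 0 ≤ u b) (hune : u false + u true > 0)
    (h : ∀ s, lam * u s ≤ M s false * u false + M s true * u true) :
    lam ≤ rho2 M := by
  rcases le_or_gt lam 0 with hlam | hlam
  · exact le_trans hlam (rho2_nonneg hM)
  set a := M false false; set bb := M false true; set c := M true false; set d := M true true
  have h0 := h false; have h1 := h true
  obtain ⟨hda, hdd⟩ := rho2_ge_diag hM
  -- cases on strict positivity of coordinates
  rcases eq_or_lt_of_le (hu false) with hu0 | hu0
  · -- u false = 0, so u true > 0 and d ≥ lam
    have hu1 : 0 < u true := by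
      rcases eq_or_lt_of_le (hu true) with h' | h'
      · exfalso; rw [← hu0, ← h'] at hune; simp at hune
      · exact h'
    have : lam * u true ≤ d * u true := by
      have := h1; rw [← hu0] at this; nlinarith
    have : lam ≤ d := le_of_mul_le_mul_right (by nlinarith) hu1
    linarith
  rcases eq_or_lt_of_le (hu true) with hu1 | hu1
  · have : lam * u false ≤ a * u false := by
      have := h0; rw [← hu1] at this; nlinarith
    have : lam ≤ a := le_of_mul_le_mul_right (by nlinarith) hu0
    linarith
  -- both positive
  rcases le_or_gt lam a with h' | h'
  · linarith
  rcases le_or_gt lam d with h'' | h''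
  · linarith
  -- lam > a and lam > d
  have e1 : (lam - a) * u false ≤ bb * u true := by nlinarith
  have e2 : (lam - d) * u true ≤ c * u false := by nlinarith
  have hprod : (lam - a) * (lam - d) ≤ bb * c := by
    have e3 : ((lam - a) * u false) * ((lam - d) * u true) ≤ (bb * u true) * (c * u false) :=
      mul_le_mul e1 e2 (mul_nonneg (by linarith) (hu true)) (mul_nonneg (hM false true) (hu true))
    have hpos := mul_pos hu0 hu1
    nlinarith [e3, hpos]
  have hsq : 2 * lam - a - d ≤ Real.sqrt ((a - d)^2 + 4 * (bb * c)) := by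
    have key : (2 * lam - a - d)^2 ≤ (a - d)^2 + 4 * (bb * c) := by nlinarith
    calc 2 * lam - a - d = |2 * lam - a - d| := (abs_of_nonneg (by linarith)).symm
      _ = Real.sqrt ((2 * lam - a - d)^2) := (Real.sqrt_sq_eq_abs _).symm
      _ ≤ Real.sqrt ((a - d)^2 + 4 * (bb * c)) := Real.sqrt_le_sqrt key
  unfold rho2
  show lam ≤ (a + d + Real.sqrt ((a - d)^2 + 4 * (bb * c))) / 2
  linarith

end Rho
end BS
namespace BS
section Spec

lemma det_bool (A : Matrix Bool Bool ℂ) :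
    A.det = A false false * A true true - A false true * A true false := by
  have h := Matrix.det_reindex_self (finTwoEquiv.symm : Bool ≃ Fin 2) A
  rw [← h, Matrix.det_fin_two]
  simp [Matrix.reindex_apply, finTwoEquiv]

lemma specRad_eq_rho2 (A : Matrix Bool Bool ℝ) (hA : ∀ s t, 0 ≤ A s t) :
    specRad A = rho2 A := by
  set a := A false false with ha
  set b := A false true with hbdef
  set c := A true false with hc
  set d := A true true with hd
  set Δ : ℝ := (a - d)^2 + 4 * (b * c) with hΔdef
  have hΔ : 0 ≤ Δ := by
    have := mul_nonneg (hA false true) (hA true false)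
    have := sq_nonneg (a - d)
    rw [hΔdef]; nlinarith
  set s := Real.sqrt Δ with hs
  have hs0 : 0 ≤ s := Real.sqrt_nonneg _
  have hs2 : s^2 = Δ := Real.sq_sqrt hΔ
  set μp : ℝ := (a + d + s) / 2 with hμp
  set μm : ℝ := (a + d - s) / 2 with hμm
  have hrho : rho2 A = μp := rfl
  have hsum : μp + μm = a + d := by rw [hμp, hμm]; ring
  have hprod : μp * μm = a * d - b * c := by
    rw [hμp, hμm]
    have : (a + d + s) / 2 * ((a + d - s) / 2) = ((a+d)^2 - s^2) / 4 := by ring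
    rw [this, hs2, hΔdef]; ring
  have hspec : spectrum ℂ (A.map Complex.ofReal) = {(μp : ℂ), (μm : ℂ)} := by
    ext μ
    rw [spectrum.mem_iff, Matrix.isUnit_iff_isUnit_det, isUnit_iff_ne_zero, not_not]
    have hdet : ((algebraMap ℂ (Matrix Bool Bool ℂ)) μ - A.map Complex.ofReal).det
        = (μ - (a:ℂ)) * (μ - (d:ℂ)) - (b:ℂ) * (c:ℂ) := by
      rw [det_bool]
      simp [Matrix.algebraMap_matrix_apply, Matrix.map_apply, ha, hbdef, hc, hd]
    rw [hdet]
    have hfactor : (μ - (a:ℂ)) * (μ - (d:ℂ)) - (b:ℂ) * (c:ℂ)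
        = (μ - (μp:ℂ)) * (μ - (μm:ℂ)) := by
      have h1 : ((μp:ℂ) + (μm:ℂ)) = (a:ℂ) + (d:ℂ) := by
        rw [← Complex.ofReal_add, hsum]; push_cast; ring
      have h2 : ((μp:ℂ) * (μm:ℂ)) = (a:ℂ) * (d:ℂ) - (b:ℂ) * (c:ℂ) := by
        rw [← Complex.ofReal_mul, hprod]; push_cast; ring
      have expand : (μ - (μp:ℂ)) * (μ - (μm:ℂ))
          = μ^2 - ((μp:ℂ) + (μm:ℂ)) * μ + (μp:ℂ) * (μm:ℂ) := by ring
      rw [expand, h1, h2]; ring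
    rw [hfactor, mul_eq_zero, sub_eq_zero, sub_eq_zero]
    simp [Set.mem_insert_iff, Set.mem_singleton_iff]
  -- now compute the sSup
  have hset : {r | ∃ μ : ℂ, μ ∈ spectrum ℂ (A.map Complex.ofReal) ∧ r = ‖μ‖}
      = {‖(μp:ℂ)‖, ‖(μm:ℂ)‖} := by
    ext r
    simp only [hspec, Set.mem_insert_iff, Set.mem_singleton_iff, Set.mem_setOf_eq]
    constructor
    · rintro ⟨μ, (rfl | rfl), rfl⟩
      · left; rfl
      · right; rfl
    · rintro (rfl | rfl)
      · exact ⟨(μp:ℂ), Or.inl rfl, rfl⟩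
      · exact ⟨(μm:ℂ), Or.inr rfl, rfl⟩
  have hμp0 : 0 ≤ μp := by
    have := hA false false; have := hA true true
    rw [hμp]; positivity
  have habs1 : ‖(μp:ℂ)‖ = μp := by
    rw [Complex.norm_real, Real.norm_eq_abs, abs_of_nonneg hμp0]
  have habs2 : ‖(μm:ℂ)‖ ≤ μp := by
    rw [Complex.norm_real, Real.norm_eq_abs]
    have h1 := hA false false; have h2 := hA true true
    rw [abs_le]
    constructor
    · rw [hμm, hμp] at *; simp only [neg_le, ha, hd] at *; nlinarith
    · rw [hμm, hμp]; linarith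
  unfold specRad
  rw [hset, csSup_pair, habs1, hrho]
  exact sup_eq_left.2 habs2

section Lam
variable {n : ℕ} (f : (Fin n → Bool) → Bool)

open Classical in
/-- Valid assignment selectors as a finset. -/
noncomputable def pairSet : Finset (Bool → Fin n → Bool) :=
  Finset.univ.filter (fun α => f (α false) = false ∧ f (α true) = true)

lemma mem_pairSet {α : Bool → Fin n → Bool} :
    α ∈ pairSet f ↔ (f (α false) = false ∧ f (α true) = true) := by
  simp [pairSet, Finset.mem_filter]

open Classical in
/-- Valid witness pairs for a selector, as a finset. -/
noncomputable def wpairSet (α : Bool → Fin n → Bool) : Finset (Bool → Finset (Fin n)) :=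
  Finset.univ.filter (fun w => ∀ b B, IsBlock f (α b) B → ((w b) ∩ B).Nonempty)

lemma mem_wpairSet {α : Bool → Fin n → Bool} {w : Bool → Finset (Fin n)} :
    w ∈ wpairSet f α ↔ ∀ b B, IsBlock f (α b) B → ((w b) ∩ B).Nonempty := by
  simp [wpairSet, Finset.mem_filter]

lemma wpairSet_nonempty (α : Bool → Fin n → Bool) : (wpairSet f α).Nonempty :=
  ⟨fun _ => Finset.univ, (mem_wpairSet f).2 (fun b B hB => by
    rw [Finset.univ_inter]; exact isBlock_nonempty hB)⟩

lemma pairSet_nonempty (hf0 : ∃ x, f x = false) (hf1 : ∃ x, f x = true) :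
    (pairSet f).Nonempty := by
  obtain ⟨x0, h0⟩ := hf0
  obtain ⟨x1, h1⟩ := hf1
  exact ⟨fun b => if b then x1 else x0, (mem_pairSet f).2 ⟨by simpa, by simpa⟩⟩

/-- The finite max-min of Perron roots. -/
noncomputable def lam0 (hp : (pairSet f).Nonempty) : ℝ :=
  (pairSet f).sup' hp (fun α =>
    (wpairSet f α).inf' (wpairSet_nonempty f α) (fun w => rho2 (profile α w)))

lemma profile_nonneg (α : Bool → Fin n → Bool) (w : Bool → Finset (Fin n)) :
    ∀ s t, 0 ≤ profile α w s t := by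
  intro s t; unfold profile; positivity

lemma hatC_eq_lam0 (hp : (pairSet f).Nonempty) : hatC f = lam0 f hp := by
  have hinner : ∀ α : Bool → Fin n → Bool,
      sInf {s | ∃ w : Bool → Finset (Fin n),
        (∀ b B, IsBlock f (α b) B → ((w b) ∩ B).Nonempty) ∧
        s = specRad (profile α w)}
      = (wpairSet f α).inf' (wpairSet_nonempty f α) (fun w => rho2 (profile α w)) := by
    intro α
    rw [Finset.inf'_eq_csInf_image]
    congr 1
    ext r
    simp only [Set.mem_image, Set.mem_setOf_eq, Finset.mem_coe]
    constructor
    · rintro ⟨w, hw, rfl⟩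
      exact ⟨w, (mem_wpairSet f).2 hw, (specRad_eq_rho2 _ (profile_nonneg α w)).symm⟩
    · rintro ⟨w, hw, rfl⟩
      exact ⟨w, (mem_wpairSet f).1 hw, (specRad_eq_rho2 _ (profile_nonneg α w)).symm⟩
  unfold hatC lam0
  rw [Finset.sup'_eq_csSup_image]
  congr 1
  ext r
  simp only [Set.mem_image, Set.mem_setOf_eq, Finset.mem_coe]
  constructor
  · rintro ⟨α, h0, h1, rfl⟩
    exact ⟨α, (mem_pairSet f).2 ⟨h0, h1⟩, (hinner α).symm⟩
  · rintro ⟨α, hα, rfl⟩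
    obtain ⟨h0, h1⟩ := (mem_pairSet f).1 hα
    exact ⟨α, h0, h1, (hinner α).symm⟩

end Lam
end Spec
end BS
namespace BS
section Eigen
variable {n : ℕ}

/-- count of indices in `w` where `y` takes value `t`. -/
noncomputable def cnt (y : Fin n → Bool) (w : Finset (Fin n)) (t : Bool) : ℝ :=
  ((w.filter (fun i => y i = t)).card : ℝ)

lemma cnt_nonneg (y : Fin n → Bool) (w : Finset (Fin n)) (t : Bool) : 0 ≤ cnt y w t := by
  unfold cnt; positivity

lemma cnt_sum (y : Fin n → Bool) (w : Finset (Fin n)) :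
    cnt y w false + cnt y w true = (w.card : ℝ) := by
  unfold cnt
  rw [← Nat.cast_add]
  congr 1
  have h2 : w.filter (fun i => y i = true) = w.filter (fun i => ¬(y i = false)) := by
    apply Finset.filter_congr
    intro i _
    cases h : y i <;> simp
  rw [h2]
  exact Finset.card_filter_add_card_filter_not (p := fun i => y i = false)

lemma profile_eq_cnt (α : Bool → Fin n → Bool) (w : Bool → Finset (Fin n)) (s t : Bool) :
    profile α w s t = cnt (α s) (w s) t := rfl

lemma rv_count (y : Fin n → Bool) (w : Finset (Fin n)) (u : Bool → ℝ) :
    rv y w u = cnt y w false * u false + cnt y w true * u true := by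
  unfold rv cnt
  rw [← Finset.sum_filter_add_sum_filter_not w (fun i => y i = false)]
  have h1 : ∑ i ∈ w.filter (fun i => y i = false), u (y i)
      = ((w.filter (fun i => y i = false)).card : ℝ) * u false := by
    rw [Finset.sum_congr rfl (fun i hi => by rw [(Finset.mem_filter.1 hi).2])]
    rw [Finset.sum_const, nsmul_eq_mul]
  have h2 : w.filter (fun i => ¬(y i = false)) = w.filter (fun i => y i = true) := by
    apply Finset.filter_congr
    intro i _
    cases h : y i <;> simp
  have h3 : ∑ i ∈ w.filter (fun i => ¬(y i = false)), u (y i)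
      = ((w.filter (fun i => y i = true)).card : ℝ) * u true := by
    rw [h2]
    rw [Finset.sum_congr rfl (fun i hi => by rw [(Finset.mem_filter.1 hi).2])]
    rw [Finset.sum_const, nsmul_eq_mul]
  rw [h1, h3]

/-- the one-parameter family of candidate eigenvectors. -/
noncomputable def ufun (t : ℝ) : Bool → ℝ := fun b => if b then t else 1 - t

lemma ufun_false (t : ℝ) : ufun t false = 1 - t := rfl
lemma ufun_true (t : ℝ) : ufun t true = t := rfl

lemma rv_ufun (y : Fin n → Bool) (w : Finset (Fin n)) (t : ℝ) :
    rv y w (ufun t) = cnt y w false * (1 - t) + cnt y w true * t := by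
  rw [rv_count]; rfl

lemma continuous_rv_ufun (y : Fin n → Bool) (w : Finset (Fin n)) :
    Continuous (fun t : ℝ => rv y w (ufun t)) := by
  have h : (fun t : ℝ => rv y w (ufun t))
      = fun t => cnt y w false * (1 - t) + cnt y w true * t := funext (rv_ufun y w)
  rw [h]
  fun_prop

lemma affine_interp {A B t1 t2 t : ℝ} (h1 : 0 ≤ A + B * t1) (h2 : 0 ≤ A + B * t2)
    (h3 : t1 ≤ t) (h4 : t ≤ t2) : 0 ≤ A + B * t := by
  rcases eq_or_lt_of_le (le_trans h3 h4 : t1 ≤ t2) with he | hlt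
  · have : t = t1 := le_antisymm (he ▸ h4) h3
    rw [this]; exact h1
  · nlinarith [mul_nonneg (sub_nonneg.2 h4) h1, mul_nonneg (sub_nonneg.2 h3) h2]

variable (f : (Fin n → Bool) → Bool)

lemma wpair_iff {α : Bool → Fin n → Bool} {w : Bool → Finset (Fin n)} :
    w ∈ wpairSet f α ↔ ∀ b, w b ∈ certSet f (α b) := by
  rw [mem_wpairSet]
  constructor
  · intro h b; exact mem_certSet.2 (fun B hB => h b B hB)
  · intro h b B hB; exact (mem_certSet.1 (h b)) B hB

lemma pair_nonconst {α : Bool → Fin n → Bool} (hα : α ∈ pairSet f) (b : Bool) :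
    ∃ z, f z ≠ f (α b) := by
  obtain ⟨h0, h1⟩ := (mem_pairSet f).1 hα
  cases b
  · exact ⟨α true, by rw [h0, h1]; simp⟩
  · exact ⟨α false, by rw [h0, h1]; simp⟩

lemma cert_card_ge_one {α : Bool → Fin n → Bool} (hα : α ∈ pairSet f) (b : Bool)
    {w : Finset (Fin n)} (hw : w ∈ certSet f (α b)) : (1:ℝ) ≤ (w.card : ℝ) := by
  have := certSet_mem_nonempty (pair_nonconst f hα b) hw
  exact_mod_cast Finset.card_pos.2 this

lemma one_le_lam0 (hp : (pairSet f).Nonempty) : 1 ≤ lam0 f hp := by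
  obtain ⟨α, hα⟩ := hp
  refine le_trans ?_ (Finset.le_sup' _ hα)
  refine Finset.le_inf' _ _ ?_
  intro W hW
  apply le_rho2_of_superinv (profile_nonneg α W) (u := fun _ => (1:ℝ))
    (by intro b; norm_num) (by norm_num)
  intro s
  have hWc := (wpair_iff f).1 hW s
  have hcard := cert_card_ge_one f hα s hWc
  have hsum := cnt_sum (α s) (W s)
  rw [profile_eq_cnt, profile_eq_cnt]
  simp only [mul_one]
  linarith

lemma lam0_nonneg (hp : (pairSet f).Nonempty) : 0 ≤ lam0 f hp :=
  le_trans (by norm_num) (one_le_lam0 f hp)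

end Eigen
end BS
namespace BS
section ClaimA
variable {n : ℕ} (f : (Fin n → Bool) → Bool)

lemma claimA (hp : (pairSet f).Nonempty) :
    ∃ α ∈ pairSet f, ∃ u : Bool → ℝ,
      (∀ b, 0 ≤ u b) ∧ (u false + u true = 1) ∧
      (∀ b, ∀ w ∈ certSet f (α b), lam0 f hp * u b ≤ rv (α b) w u) := by
  classical
  set m := lam0 f hp with hm
  obtain ⟨α, hα, hαeq⟩ := Finset.exists_mem_eq_sup' hp (fun α =>
    (wpairSet f α).inf' (wpairSet_nonempty f α) (fun w => rho2 (profile α w)))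
  refine ⟨α, hα, ?_⟩
  set Tt : Set ℝ := {t | t ∈ Set.Icc (0:ℝ) 1 ∧
    ∀ w ∈ certSet f (α true), m * t ≤ rv (α true) w (ufun t)} with hTt
  set Tf : Set ℝ := {t | t ∈ Set.Icc (0:ℝ) 1 ∧
    ∀ w ∈ certSet f (α false), m * (1 - t) ≤ rv (α false) w (ufun t)} with hTf
  have hufun_nonneg : ∀ t ∈ Set.Icc (0:ℝ) 1, ∀ b, 0 ≤ ufun t b := by
    rintro t ⟨h0, h1⟩ b
    cases b
    · rw [ufun_false]; linarith
    · rw [ufun_true]; linarith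
  have hrv_nonneg : ∀ (y : Fin n → Bool) (w : Finset (Fin n)) (t : ℝ), t ∈ Set.Icc (0:ℝ) 1 →
      0 ≤ rv y w (ufun t) := by
    intro y w t ht
    unfold rv
    exact Finset.sum_nonneg (fun i _ => hufun_nonneg t ht _)
  have h0t : (0:ℝ) ∈ Tt := by
    refine ⟨⟨le_refl _, by norm_num⟩, ?_⟩
    intro w hw
    rw [mul_zero]
    exact hrv_nonneg _ _ 0 ⟨le_refl _, by norm_num⟩
  have h1f : (1:ℝ) ∈ Tf := by
    refine ⟨⟨by norm_num, le_refl _⟩, ?_⟩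
    intro w hw
    rw [sub_self, mul_zero]
    exact hrv_nonneg _ _ 1 ⟨by norm_num, le_refl _⟩
  -- convexity
  have hconvTt : ∀ t1 ∈ Tt, ∀ t2 ∈ Tt, ∀ t, t1 ≤ t → t ≤ t2 → t ∈ Tt := by
    rintro t1 ⟨⟨h1a, h1b⟩, h1⟩ t2 ⟨⟨h2a, h2b⟩, h2⟩ t hta htb
    refine ⟨⟨le_trans h1a hta, le_trans htb h2b⟩, ?_⟩
    intro w hw
    have e1 := h1 w hw
    have e2 := h2 w hw
    rw [rv_ufun] at e1 e2 ⊢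
    have goal : 0 ≤ cnt (α true) w false +
        (cnt (α true) w true - cnt (α true) w false - m) * t := by
      apply affine_interp (t1 := t1) (t2 := t2) _ _ hta htb
      · nlinarith
      · nlinarith
    nlinarith
  have hconvTf : ∀ t1 ∈ Tf, ∀ t2 ∈ Tf, ∀ t, t1 ≤ t → t ≤ t2 → t ∈ Tf := by
    rintro t1 ⟨⟨h1a, h1b⟩, h1⟩ t2 ⟨⟨h2a, h2b⟩, h2⟩ t hta htb
    refine ⟨⟨le_trans h1a hta, le_trans htb h2b⟩, ?_⟩
    intro w hw
    have e1 := h1 w hw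
    have e2 := h2 w hw
    rw [rv_ufun] at e1 e2 ⊢
    have goal : 0 ≤ (cnt (α false) w false - m) +
        (cnt (α false) w true - cnt (α false) w false + m) * t := by
      apply affine_interp (t1 := t1) (t2 := t2) _ _ hta htb
      · nlinarith
      · nlinarith
    nlinarith
  -- closedness and compactness
  have hclTt : IsClosed Tt := by
    rw [hTt]
    have : {t : ℝ | t ∈ Set.Icc (0:ℝ) 1 ∧
        ∀ w ∈ certSet f (α true), m * t ≤ rv (α true) w (ufun t)}
        = Set.Icc (0:ℝ) 1 ∩ ⋂ w ∈ certSet f (α true), {t : ℝ | m * t ≤ rv (α true) w (ufun t)} := by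
      ext t; simp [Set.mem_iInter]
    rw [this]
    refine isClosed_Icc.inter (isClosed_biInter (fun w _ => ?_))
    exact isClosed_le (by fun_prop) (continuous_rv_ufun _ _)
  have hclTf : IsClosed Tf := by
    rw [hTf]
    have : {t : ℝ | t ∈ Set.Icc (0:ℝ) 1 ∧
        ∀ w ∈ certSet f (α false), m * (1 - t) ≤ rv (α false) w (ufun t)}
        = Set.Icc (0:ℝ) 1 ∩ ⋂ w ∈ certSet f (α false), {t : ℝ | m * (1 - t) ≤ rv (α false) w (ufun t)} := by
      ext t; simp [Set.mem_iInter]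
    rw [this]
    refine isClosed_Icc.inter (isClosed_biInter (fun w _ => ?_))
    exact isClosed_le (by fun_prop) (continuous_rv_ufun _ _)
  have hcompTt : IsCompact Tt :=
    isCompact_Icc.of_isClosed_subset hclTt (fun t ht => ht.1)
  have hcompTf : IsCompact Tf :=
    isCompact_Icc.of_isClosed_subset hclTf (fun t ht => ht.1)
  set t0 := sSup Tt with ht0
  have ht0mem : t0 ∈ Tt := hcompTt.sSup_mem ⟨0, h0t⟩
  by_cases hcase : t0 ∈ Tf
  · -- success
    refine ⟨ufun t0, hufun_nonneg t0 ht0mem.1, by rw [ufun_false, ufun_true]; ring, ?_⟩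
    intro b w hw
    cases b
    · exact hcase.2 w hw
    · exact ht0mem.2 w hw
  · -- contradiction branch
    exfalso
    set s0 := sInf Tf with hs0
    have hs0mem : s0 ∈ Tf := hcompTf.sInf_mem ⟨1, h1f⟩
    have hlt : t0 < s0 := by
      by_contra hle
      push_neg at hle
      exact hcase (hconvTf s0 hs0mem 1 h1f t0 hle ht0mem.1.2)
    set tm := (t0 + s0) / 2 with htm
    have htm1 : t0 < tm := by rw [htm]; linarith
    have htm2 : tm < s0 := by rw [htm]; linarith
    have htmpos : 0 < tm := lt_of_le_of_lt ht0mem.1.1 htm1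
    have htmlt1 : tm < 1 := lt_of_lt_of_le htm2 hs0mem.1.2
    have htmIcc : tm ∈ Set.Icc (0:ℝ) 1 := ⟨htmpos.le, htmlt1.le⟩
    have htmTt : tm ∉ Tt := by
      intro hmem
      have : tm ≤ t0 := le_csSup (⟨1, fun x hx => hx.1.2⟩ : BddAbove Tt) hmem
      linarith
    have htmTf : tm ∉ Tf := by
      intro hmem
      have : s0 ≤ tm := csInf_le (⟨0, fun x hx => hx.1.1⟩ : BddBelow Tf) hmem
      linarith
    -- extract violated witnesses
    have hwt : ∃ w1 ∈ certSet f (α true), rv (α true) w1 (ufun tm) < m * tm := by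
      by_contra hcon
      push_neg at hcon
      exact htmTt ⟨htmIcc, fun w hw => (hcon w hw)⟩
    have hwf : ∃ w0 ∈ certSet f (α false), rv (α false) w0 (ufun tm) < m * (1 - tm) := by
      by_contra hcon
      push_neg at hcon
      exact htmTf ⟨htmIcc, fun w hw => (hcon w hw)⟩
    obtain ⟨w1, hw1, hw1lt⟩ := hwt
    obtain ⟨w0, hw0, hw0lt⟩ := hwf
    set W : Bool → Finset (Fin n) := fun b => if b then w1 else w0 with hW
    have hWmem : W ∈ wpairSet f α := by
      rw [wpair_iff]
      intro b
      cases b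
      · exact hw0
      · exact hw1
    have hmle : m ≤ rho2 (profile α W) := by
      have hl : lam0 f hp = (wpairSet f α).inf' (wpairSet_nonempty f α)
          (fun w => rho2 (profile α w)) := hαeq
      rw [hm]
      exact le_trans (le_of_eq hl) (Finset.inf'_le _ hWmem)
    -- sub-invariance gives rho2 < m
    set lam' := max ((rv (α false) w0 (ufun tm)) / (1 - tm)) ((rv (α true) w1 (ufun tm)) / tm)
      with hlam'
    have hlam'lt : lam' < m := by
      rw [hlam']
      apply max_lt
      · rw [div_lt_iff₀ (by linarith)]; linarith [hw0lt]
      · rw [div_lt_iff₀ htmpos]; linarith [hw1lt]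
    have hrhole : rho2 (profile α W) ≤ lam' := by
      apply rho2_le_of_subinv (profile_nonneg α W) (u := ufun tm)
      · intro b
        cases b
        · rw [ufun_false]; linarith
        · rw [ufun_true]; exact htmpos
      · intro s
        have hre : profile α W s false * ufun tm false + profile α W s true * ufun tm true
            = rv (α s) (W s) (ufun tm) := by
          rw [rv_count, profile_eq_cnt, profile_eq_cnt]
        rw [hre]
        cases s
        · have h1 : rv (α false) (W false) (ufun tm) / (1 - tm) ≤ lam' := le_max_left _ _
          have h2 : (0:ℝ) < 1 - tm := by linarith
          have := (div_le_iff₀ h2).1 h1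
          calc rv (α false) (W false) (ufun tm) ≤ lam' * (1 - tm) := by
                have hWf : W false = w0 := rfl
                rw [hWf] at *
                exact this
            _ = lam' * ufun tm false := by rw [ufun_false]
        · have h1 : rv (α true) (W true) (ufun tm) / tm ≤ lam' := le_max_right _ _
          have := (div_le_iff₀ htmpos).1 h1
          calc rv (α true) (W true) (ufun tm) ≤ lam' * tm := by
                have hWt : W true = w1 := rfl
                rw [hWt] at *
                exact this
            _ = lam' * ufun tm true := by rw [ufun_true]
    linarith

end ClaimA
end BS
namespace BS
section ClaimB
variable {n : ℕ} (f : (Fin n → Bool) → Bool)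

lemma claimB (hb : ∀ b : Bool, (inputSet f b).Nonempty) (hp : (pairSet f).Nonempty)
    {lam' : ℝ} (hlam' : lam0 f hp < lam') :
    ∃ u : Bool → ℝ, (∀ b, 0 < u b) ∧ ∀ b, Gop f hb u b ≤ lam' * u b := by
  classical
  -- violation sets
  set Vf : Set ℝ := {t | ∃ y ∈ inputSet f false,
    ∀ w ∈ certSet f y, lam' * (1 - t) < rv y w (ufun t)} with hVf
  set Vt : Set ℝ := {t | ∃ y ∈ inputSet f true,
    ∀ w ∈ certSet f y, lam' * t < rv y w (ufun t)} with hVt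
  -- key: a good point exists in (0,1)
  have hmain : ∃ t ∈ Set.Ioo (0:ℝ) 1, t ∉ Vf ∧ t ∉ Vt := by
    by_contra hcon
    push_neg at hcon
    -- so Ioo 0 1 ⊆ Vf ∪ Vt
    have hcover : Set.Ioo (0:ℝ) 1 ⊆ Vf ∪ Vt := by
      intro t ht
      rcases Classical.em (t ∈ Vf) with h | h
      · exact Or.inl h
      · exact Or.inr ((hcon t ht h))
    have hVfopen : IsOpen Vf := by
      rw [hVf]
      have : {t : ℝ | ∃ y ∈ inputSet f false, ∀ w ∈ certSet f y, lam' * (1 - t) < rv y w (ufun t)}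
          = ⋃ y ∈ inputSet f false, ⋂ w ∈ certSet f y, {t : ℝ | lam' * (1 - t) < rv y w (ufun t)} := by
        ext t; simp [Set.mem_iUnion, Set.mem_iInter]
      rw [this]
      refine isOpen_biUnion (fun y _ => ?_)
      refine isOpen_biInter_finset (fun w _ => ?_)
      exact isOpen_lt (by fun_prop) (continuous_rv_ufun _ _)
    have hVtopen : IsOpen Vt := by
      rw [hVt]
      have : {t : ℝ | ∃ y ∈ inputSet f true, ∀ w ∈ certSet f y, lam' * t < rv y w (ufun t)}
          = ⋃ y ∈ inputSet f true, ⋂ w ∈ certSet f y, {t : ℝ | lam' * t < rv y w (ufun t)} := by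
        ext t; simp [Set.mem_iUnion, Set.mem_iInter]
      rw [this]
      refine isOpen_biUnion (fun y _ => ?_)
      refine isOpen_biInter_finset (fun w _ => ?_)
      exact isOpen_lt (by fun_prop) (continuous_rv_ufun _ _)
    -- case: both violated somewhere in (0,1)
    by_cases hVfne : (Set.Ioo (0:ℝ) 1 ∩ Vf).Nonempty
    · by_cases hVtne : (Set.Ioo (0:ℝ) 1 ∩ Vt).Nonempty
      · -- preconnectedness gives a common point
        have hpre : IsPreconnected (Set.Ioo (0:ℝ) 1) := isPreconnected_Ioo
        have hkey := hpre Vf Vt hVfopen hVtopen hcover hVfne hVtne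
        obtain ⟨t, htIoo, htVf, htVt⟩ := hkey
        obtain ⟨y0, hy0, hy0v⟩ := htVf
        obtain ⟨y1, hy1, hy1v⟩ := htVt
        set α : Bool → Fin n → Bool := fun b => if b then y1 else y0 with hαdef
        have hαmem : α ∈ pairSet f := by
          rw [mem_pairSet]
          exact ⟨mem_inputSet.1 hy0, mem_inputSet.1 hy1⟩
        have hle : lam0 f hp < lam' := hlam'
        have hinf : (wpairSet f α).inf' (wpairSet_nonempty f α)
            (fun w => rho2 (profile α w)) ≤ lam0 f hp := by
          unfold lam0
          exact Finset.le_sup' (fun α' => (wpairSet f α').inf' (wpairSet_nonempty f α')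
            (fun w => rho2 (profile α' w))) hαmem
        have hge : lam' ≤ (wpairSet f α).inf' (wpairSet_nonempty f α)
            (fun w => rho2 (profile α w)) := by
          refine Finset.le_inf' _ _ ?_
          intro W hW
          apply le_rho2_of_superinv (profile_nonneg α W) (u := ufun t)
          · intro b
            cases b
            · rw [ufun_false]; linarith [htIoo.2]
            · rw [ufun_true]; linarith [htIoo.1]
          · rw [ufun_false, ufun_true]; linarith [htIoo.1, htIoo.2]
          · intro s
            have hre : profile α W s false * ufun t false + profile α W s true * ufun t true
                = rv (α s) (W s) (ufun t) := by
              rw [rv_count, profile_eq_cnt, profile_eq_cnt]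
            rw [hre]
            have hWc := (wpair_iff f).1 hW s
            cases s
            · have : α false = y0 := rfl
              rw [this] at hWc ⊢
              have := hy0v (W false) hWc
              rw [ufun_false]
              linarith
            · have : α true = y1 := rfl
              rw [this] at hWc ⊢
              have := hy1v (W true) hWc
              rw [ufun_true]
              linarith
        linarith
      · -- Vt misses (0,1): whole interval in Vf; take limit t → 0
        rw [Set.not_nonempty_iff_eq_empty] at hVtne
        have hsub : Set.Ioo (0:ℝ) 1 ⊆ Vf := by
          intro t ht
          rcases hcover ht with h | h
          · exact h
          · exfalso
            have : t ∈ Set.Ioo (0:ℝ) 1 ∩ Vt := ⟨ht, h⟩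
            rw [hVtne] at this
            exact this
        -- closed superset
        set C : Set ℝ := ⋃ y ∈ inputSet f false,
          ⋂ w ∈ certSet f y, {t : ℝ | lam' * (1 - t) ≤ rv y w (ufun t)} with hC
        have hCclosed : IsClosed C := by
          rw [hC]
          refine Set.Finite.isClosed_biUnion (Finset.finite_toSet _) (fun y _ => ?_)
          refine isClosed_biInter (fun w _ => ?_)
          exact isClosed_le (by fun_prop) (continuous_rv_ufun _ _)
        have hsubC : Set.Ioo (0:ℝ) 1 ⊆ C := by
          intro t ht
          obtain ⟨y, hy, hyv⟩ := hsub ht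
          rw [hC]
          refine Set.mem_biUnion hy ?_
          refine Set.mem_biInter (fun w hw => ?_)
          exact le_of_lt (hyv w hw)
        have h0C : (0:ℝ) ∈ C := by
          have h1 : (0:ℝ) ∈ closure (Set.Ioo (0:ℝ) 1) := by
            rw [closure_Ioo (by norm_num : (0:ℝ) ≠ 1)]
            exact ⟨le_refl _, by norm_num⟩
          exact (closure_minimal hsubC hCclosed) h1
        -- extract y* with all-certificates false-count ≥ lam'
        rw [hC] at h0C
        obtain ⟨y, hy, hyv⟩ := Set.mem_iUnion₂.1 h0C
        have hyv' : ∀ w ∈ certSet f y, lam' ≤ cnt y w false := by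
          intro w hw
          have := Set.mem_iInter₂.1 hyv w hw
          rw [Set.mem_setOf_eq, rv_ufun] at this
          simpa using this
        -- contradiction with lam0 bound
        obtain ⟨y1, hy1⟩ := hb true
        set α : Bool → Fin n → Bool := fun b => if b then y1 else y with hαdef
        have hαmem : α ∈ pairSet f := by
          rw [mem_pairSet]
          exact ⟨mem_inputSet.1 hy, mem_inputSet.1 hy1⟩
        have hinf : (wpairSet f α).inf' (wpairSet_nonempty f α)
            (fun w => rho2 (profile α w)) ≤ lam0 f hp := by
          unfold lam0
          exact Finset.le_sup' (fun α' => (wpairSet f α').inf' (wpairSet_nonempty f α')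
            (fun w => rho2 (profile α' w))) hαmem
        have hge : lam' ≤ (wpairSet f α).inf' (wpairSet_nonempty f α)
            (fun w => rho2 (profile α w)) := by
          refine Finset.le_inf' _ _ ?_
          intro W hW
          have hWc := (wpair_iff f).1 hW false
          have hαf : α false = y := rfl
          rw [hαf] at hWc
          have h1 : lam' ≤ profile α W false false := by
            rw [profile_eq_cnt, hαf]
            exact hyv' (W false) hWc
          exact le_trans h1 (rho2_ge_diag (profile_nonneg α W)).1
        linarith
    · -- Vf misses (0,1): whole interval in Vt; take limit t → 1
      have hsub : Set.Ioo (0:ℝ) 1 ⊆ Vt := by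
        intro t ht
        rcases hcover ht with h | h
        · exfalso; exact hVfne ⟨t, ht, h⟩
        · exact h
      set C : Set ℝ := ⋃ y ∈ inputSet f true,
        ⋂ w ∈ certSet f y, {t : ℝ | lam' * t ≤ rv y w (ufun t)} with hC
      have hCclosed : IsClosed C := by
        rw [hC]
        refine Set.Finite.isClosed_biUnion (Finset.finite_toSet _) (fun y _ => ?_)
        refine isClosed_biInter (fun w _ => ?_)
        exact isClosed_le (by fun_prop) (continuous_rv_ufun _ _)
      have hsubC : Set.Ioo (0:ℝ) 1 ⊆ C := by
        intro t ht
        obtain ⟨y, hy, hyv⟩ := hsub ht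
        rw [hC]
        refine Set.mem_biUnion hy ?_
        refine Set.mem_biInter (fun w hw => ?_)
        exact le_of_lt (hyv w hw)
      have h1C : (1:ℝ) ∈ C := by
        have h1 : (1:ℝ) ∈ closure (Set.Ioo (0:ℝ) 1) := by
          rw [closure_Ioo (by norm_num : (0:ℝ) ≠ 1)]
          exact ⟨by norm_num, le_refl _⟩
        exact (closure_minimal hsubC hCclosed) h1
      rw [hC] at h1C
      obtain ⟨y, hy, hyv⟩ := Set.mem_iUnion₂.1 h1C
      have hyv' : ∀ w ∈ certSet f y, lam' ≤ cnt y w true := by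
        intro w hw
        have := Set.mem_iInter₂.1 hyv w hw
        rw [Set.mem_setOf_eq, rv_ufun] at this
        simpa using this
      obtain ⟨y0, hy0⟩ := hb false
      set α : Bool → Fin n → Bool := fun b => if b then y else y0 with hαdef
      have hαmem : α ∈ pairSet f := by
        rw [mem_pairSet]
        exact ⟨mem_inputSet.1 hy0, mem_inputSet.1 hy⟩
      have hinf : (wpairSet f α).inf' (wpairSet_nonempty f α)
          (fun w => rho2 (profile α w)) ≤ lam0 f hp := by
        unfold lam0
        exact Finset.le_sup' (fun α' => (wpairSet f α').inf' (wpairSet_nonempty f α')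
          (fun w => rho2 (profile α' w))) hαmem
      have hge : lam' ≤ (wpairSet f α).inf' (wpairSet_nonempty f α)
          (fun w => rho2 (profile α w)) := by
        refine Finset.le_inf' _ _ ?_
        intro W hW
        have hWc := (wpair_iff f).1 hW true
        have hαt : α true = y := rfl
        rw [hαt] at hWc
        have h1 : lam' ≤ profile α W true true := by
          rw [profile_eq_cnt, hαt]
          exact hyv' (W true) hWc
        exact le_trans h1 (rho2_ge_diag (profile_nonneg α W)).2
      linarith
  -- assemble u from the good point
  obtain ⟨t, htIoo, htVf, htVt⟩ := hmain
  refine ⟨ufun t, ?_, ?_⟩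
  · intro b
    cases b
    · rw [ufun_false]; linarith [htIoo.2]
    · rw [ufun_true]; exact htIoo.1
  · intro b
    rw [hVf] at htVf
    rw [hVt] at htVt
    cases b
    · -- Gop at false
      refine Finset.sup'_le _ _ ?_
      intro y hy
      rw [Set.mem_setOf_eq] at htVf
      push_neg at htVf
      obtain ⟨w, hw, hwle⟩ := htVf y hy
      calc (certSet f y).inf' (certSet_nonempty f y) (fun w => rv y w (ufun t))
          ≤ rv y w (ufun t) := Finset.inf'_le _ hw
        _ ≤ lam' * (1 - t) := hwle
        _ = lam' * ufun t false := by rw [ufun_false]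
    · refine Finset.sup'_le _ _ ?_
      intro y hy
      rw [Set.mem_setOf_eq] at htVt
      push_neg at htVt
      obtain ⟨w, hw, hwle⟩ := htVt y hy
      calc (certSet f y).inf' (certSet_nonempty f y) (fun w => rv y w (ufun t))
          ≤ rv y w (ufun t) := Finset.inf'_le _ hw
        _ ≤ lam' * t := hwle
        _ = lam' * ufun t true := by rw [ufun_true]

end ClaimB
end BS
namespace BS
section Growth
variable {n : ℕ} (f : (Fin n → Bool) → Bool)

lemma Gop_mono (hb : ∀ b : Bool, (inputSet f b).Nonempty) {v v' : Bool → ℝ}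
    (h : ∀ b, v b ≤ v' b) (b : Bool) : Gop f hb v b ≤ Gop f hb v' b := by
  refine Finset.sup'_le _ _ (fun y hy => le_trans ?_
    (Finset.le_sup' (fun y => (certSet f y).inf' (certSet_nonempty f y)
      (fun w => rv y w v')) hy))
  refine Finset.le_inf' _ _ (fun w hw => le_trans (Finset.inf'_le _ hw) ?_)
  unfold rv
  exact Finset.sum_le_sum (fun i _ => h _)

lemma Gop_smul_le (hb : ∀ b : Bool, (inputSet f b).Nonempty) {c : ℝ} (hc : 0 ≤ c)
    (u : Bool → ℝ) (b : Bool) : Gop f hb (fun t => c * u t) b ≤ c * Gop f hb u b := by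
  refine Finset.sup'_le _ _ (fun y hy => ?_)
  obtain ⟨w0, hw0, hw0e⟩ := Finset.exists_mem_eq_inf' (certSet_nonempty f y) (fun w => rv y w u)
  calc (certSet f y).inf' (certSet_nonempty f y) (fun w => rv y w (fun t => c * u t))
      ≤ rv y w0 (fun t => c * u t) := Finset.inf'_le _ hw0
    _ = c * rv y w0 u := by unfold rv; rw [Finset.mul_sum]
    _ = c * (certSet f y).inf' (certSet_nonempty f y) (fun w => rv y w u) := by rw [← hw0e]
    _ ≤ c * Gop f hb u b := by
        apply mul_le_mul_of_nonneg_left _ hc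
        exact Finset.le_sup' (fun y => (certSet f y).inf' (certSet_nonempty f y)
          (fun w => rv y w u)) hy

lemma vIter_upper (hb : ∀ b : Bool, (inputSet f b).Nonempty) (hp : (pairSet f).Nonempty)
    {lam' : ℝ} (hlam' : lam0 f hp < lam') :
    ∃ K : ℝ, 0 < K ∧ ∀ k b, vIter f hb k b ≤ K * lam' ^ k := by
  obtain ⟨u, hu, hGu⟩ := claimB f hb hp hlam'
  have hlam'0 : 0 ≤ lam' := le_trans (lam0_nonneg f hp) hlam'.le
  set K0 : ℝ := (min (u false) (u true))⁻¹ with hK0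
  have hmin : 0 < min (u false) (u true) := lt_min (hu false) (hu true)
  have hK0pos : 0 < K0 := inv_pos.2 hmin
  have hstep : ∀ k b, vIter f hb k b ≤ K0 * lam' ^ k * u b := by
    intro k
    induction k with
    | zero =>
      intro b
      show (1:ℝ) ≤ K0 * lam' ^ 0 * u b
      rw [pow_zero, mul_one]
      rw [hK0]
      rw [inv_mul_eq_div, le_div_iff₀ hmin]
      have : min (u false) (u true) ≤ u b := by
        cases b
        · exact min_le_left _ _
        · exact min_le_right _ _
      linarith
    | succ k ih =>
      intro b
      show Gop f hb (vIter f hb k) b ≤ K0 * lam' ^ (k+1) * u b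
      calc Gop f hb (vIter f hb k) b
          ≤ Gop f hb (fun t => (K0 * lam' ^ k) * u t) b := by
            apply Gop_mono
            intro t
            exact ih t
        _ ≤ (K0 * lam' ^ k) * Gop f hb u b := by
            apply Gop_smul_le
            exact mul_nonneg hK0pos.le (pow_nonneg hlam'0 k)
        _ ≤ (K0 * lam' ^ k) * (lam' * u b) := by
            apply mul_le_mul_of_nonneg_left (hGu b)
            exact mul_nonneg hK0pos.le (pow_nonneg hlam'0 k)
        _ = K0 * lam' ^ (k+1) * u b := by ring
  have humax : ∀ b, u b ≤ max (u false) (u true) := by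
    intro b; cases b
    · exact le_max_left _ _
    · exact le_max_right _ _
  refine ⟨K0 * max (u false) (u true),
    mul_pos hK0pos (lt_of_lt_of_le (hu false) (le_max_left _ _)), ?_⟩
  intro k b
  calc vIter f hb k b ≤ K0 * lam' ^ k * u b := hstep k b
    _ ≤ K0 * lam' ^ k * max (u false) (u true) := by
        apply mul_le_mul_of_nonneg_left (humax b)
        exact mul_nonneg hK0pos.le (pow_nonneg hlam'0 k)
    _ = K0 * max (u false) (u true) * lam' ^ k := by ring

lemma alpha_mem_inputSet {α : Bool → Fin n → Bool} (hα : α ∈ pairSet f) (b : Bool) :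
    α b ∈ inputSet f b := by
  obtain ⟨h0, h1⟩ := (mem_pairSet f).1 hα
  cases b
  · exact mem_inputSet.2 h0
  · exact mem_inputSet.2 h1

lemma vIter_lower (hb : ∀ b : Bool, (inputSet f b).Nonempty) (hp : (pairSet f).Nonempty) :
    ∃ c : ℝ, 0 < c ∧ c ≤ 1 ∧ ∃ b0 : Bool, ∀ k, c * (lam0 f hp) ^ k ≤ vIter f hb k b0 := by
  obtain ⟨α, hα, u, hu0, husum, hukey⟩ := claimA f hp
  set m := lam0 f hp with hm
  have hm0 : 0 ≤ m := lam0_nonneg f hp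
  have hub : ∀ b, u b ≤ 1 := by
    intro b
    have h0 := hu0 false; have h1 := hu0 true
    cases b <;> linarith [husum]
  have hstep : ∀ k b, m ^ k * u b ≤ vIter f hb k b := by
    intro k
    induction k with
    | zero =>
      intro b
      show m ^ 0 * u b ≤ (1:ℝ)
      rw [pow_zero, one_mul]
      exact hub b
    | succ k ih =>
      intro b
      show m ^ (k+1) * u b ≤ Gop f hb (vIter f hb k) b
      have hymem : α b ∈ inputSet f b := alpha_mem_inputSet f hα b
      refine le_trans ?_ (Finset.le_sup' _ hymem)
      refine Finset.le_inf' _ _ ?_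
      intro w hw
      have h1 : m * u b ≤ rv (α b) w u := hukey b w hw
      have h2 : m ^ k * rv (α b) w u ≤ rv (α b) w (vIter f hb k) := by
        have : rv (α b) w (fun t => m ^ k * u t) = m ^ k * rv (α b) w u := by
          unfold rv; rw [Finset.mul_sum]
        rw [← this]
        unfold rv
        exact Finset.sum_le_sum (fun i _ => ih _)
      calc m ^ (k+1) * u b = m ^ k * (m * u b) := by ring
        _ ≤ m ^ k * rv (α b) w u := by
            apply mul_le_mul_of_nonneg_left h1
            positivity
        _ ≤ rv (α b) w (vIter f hb k) := h2
  have hbpos : ∃ b0, 0 < u b0 := by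
    by_contra hcon
    push_neg at hcon
    have h0 := le_antisymm (hcon false) (hu0 false)
    have h1 := le_antisymm (hcon true) (hu0 true)
    rw [h0, h1] at husum
    norm_num at husum
  obtain ⟨b0, hb0⟩ := hbpos
  exact ⟨u b0, hb0, hub b0, b0, fun k => by
    have := hstep k b0
    linarith [this]⟩

lemma fin_n_pos (hp : (pairSet f).Nonempty) : 0 < n := by
  obtain ⟨α, hα⟩ := hp
  obtain ⟨h0, h1⟩ := (mem_pairSet f).1 hα
  by_contra hn
  push_neg at hn
  interval_cases n
  have : α false = α true := by
    funext i; exact absurd i.2 (by omega)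
  rw [this, h1] at h0
  exact absurd h0 (by simp)

lemma Cm_le_max (hb : ∀ b : Bool, (inputSet f b).Nonempty) (hp : (pairSet f).Nonempty) (k : ℕ) :
    (Cm (iter f k) : ℝ) ≤ max (vIter f hb k false) (vIter f hb k true) := by
  have hn := fin_n_pos f hp
  have : Nonempty (Fin k → Fin n) := ⟨fun _ => ⟨0, hn⟩⟩
  obtain ⟨x, hx⟩ := exists_Cm (iter f k)
  rw [hx]
  refine le_trans (CAt_iter_le_vIter f hb k x) ?_
  cases h : iter f k x
  · exact le_max_left _ _
  · exact le_max_right _ _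

lemma le_Cm_iter (hb : ∀ b : Bool, (inputSet f b).Nonempty) (k : ℕ) (b : Bool) :
    vIter f hb k b ≤ (Cm (iter f k) : ℝ) := by
  obtain ⟨x, hxv, hxc⟩ := exists_hard_input f hb k b
  refine le_trans hxc ?_
  exact_mod_cast CAt_le_Cm (iter f k) x

lemma one_le_Cm_iter (hb : ∀ b : Bool, (inputSet f b).Nonempty) (k : ℕ) :
    (1:ℝ) ≤ (Cm (iter f k) : ℝ) := by
  obtain ⟨x, hxv, hxc⟩ := exists_hard_input f hb k false
  have h1 : 1 ≤ CAt (iter f k) x := one_le_CAt (iter_nonconst f hb k x)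
  have h2 := CAt_le_Cm (iter f k) x
  exact_mod_cast le_trans h1 h2

end Growth
end BS
open Filter BS in
/-- For any non-constant boolean function `f` on `n` variables,
`liminf C(f^(k))^(1/k) = Ĉ(f)`. -/
theorem C_lim_eq_hatC {n : ℕ} (f : (Fin n → Bool) → Bool)
    (hf0 : ∃ x, f x = false) (hf1 : ∃ x, f x = true) :
    Filter.liminf (fun k : ℕ => (Cm (iter f k) : ℝ) ^ (1 / (k : ℝ))) Filter.atTop =
      hatC f := by
  have hb : ∀ b : Bool, (inputSet f b).Nonempty := by
    intro b
    cases b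
    · obtain ⟨x, hx⟩ := hf0; exact ⟨x, mem_inputSet.2 hx⟩
    · obtain ⟨x, hx⟩ := hf1; exact ⟨x, mem_inputSet.2 hx⟩
  have hp := pairSet_nonempty f hf0 hf1
  have hm1 : 1 ≤ lam0 f hp := one_le_lam0 f hp
  have hm0 : (0:ℝ) < lam0 f hp := by linarith
  rw [hatC_eq_lam0 f hp]
  set m := lam0 f hp with hm
  set a : ℕ → ℝ := fun k => (Cm (iter f k) : ℝ) ^ (1 / (k : ℝ)) with ha
  -- generic tendsto helper
  have htendK : ∀ K : ℝ, 0 < K → ∀ r : ℝ,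
      Filter.Tendsto (fun k : ℕ => K ^ (1/(k:ℝ)) * r) Filter.atTop (nhds r) := by
    intro K hK r
    have h1 : Filter.Tendsto (fun k : ℕ => (1/(k:ℝ))) Filter.atTop (nhds 0) :=
      tendsto_one_div_atTop_nhds_zero_nat
    have h2 : ContinuousAt (fun x : ℝ => K ^ x) 0 :=
      Real.continuousAt_const_rpow (ne_of_gt hK)
    have h3 : Filter.Tendsto (fun k : ℕ => K ^ (1/(k:ℝ))) Filter.atTop (nhds 1) := by
      have := h2.tendsto.comp h1
      simpa [Function.comp_def, Real.rpow_zero] using this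
    have := h3.mul_const r
    rwa [one_mul] at this
  -- pow-root identity
  have hroot : ∀ (x : ℝ), 0 < x → ∀ k : ℕ, 1 ≤ k → ((x ^ k : ℝ)) ^ (1/(k:ℝ)) = x := by
    intro x hx k hk
    have hkR : (0:ℝ) < (k:ℝ) := by exact_mod_cast hk
    rw [← Real.rpow_natCast x k, ← Real.rpow_mul hx.le]
    rw [mul_one_div, div_self (ne_of_gt hkR), Real.rpow_one]
  -- lower eventual bound
  obtain ⟨c, hc0, hc1, b0, hlow⟩ := vIter_lower f hb hp
  have hev_low : ∀ᶠ k : ℕ in Filter.atTop, c ^ (1/(k:ℝ)) * m ≤ a k := by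
    rw [Filter.eventually_atTop]
    refine ⟨1, fun k hk => ?_⟩
    have h1 : c * m ^ k ≤ (Cm (iter f k) : ℝ) :=
      le_trans (hlow k) (le_Cm_iter f hb k b0)
    have e2 : (c * m ^ k) ^ (1/(k:ℝ)) = c ^ (1/(k:ℝ)) * m := by
      rw [Real.mul_rpow hc0.le (by positivity), hroot m hm0 k hk]
    calc c ^ (1/(k:ℝ)) * m = (c * m ^ k) ^ (1/(k:ℝ)) := e2.symm
      _ ≤ a k := Real.rpow_le_rpow (by positivity) h1 (by positivity)
  have htc : Filter.Tendsto (fun k : ℕ => c ^ (1/(k:ℝ)) * m) Filter.atTop (nhds m) :=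
    htendK c hc0 m
  -- upper eventual bounds
  have hupper : ∀ lam' : ℝ, m < lam' → ∃ K : ℝ, 0 < K ∧
      ∀ᶠ k : ℕ in Filter.atTop, a k ≤ K ^ (1/(k:ℝ)) * lam' := by
    intro lam' hlam'
    obtain ⟨K, hK, hKb⟩ := vIter_upper f hb hp hlam'
    refine ⟨K, hK, ?_⟩
    rw [Filter.eventually_atTop]
    refine ⟨1, fun k hk => ?_⟩
    have hlam'0 : (0:ℝ) < lam' := lt_trans hm0 hlam'
    have hCm : (Cm (iter f k):ℝ) ≤ K * lam' ^ k :=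
      le_trans (Cm_le_max f hb hp k) (max_le (hKb k false) (hKb k true))
    have e2 : (K * lam' ^ k) ^ (1/(k:ℝ)) = K ^ (1/(k:ℝ)) * lam' := by
      rw [Real.mul_rpow hK.le (by positivity), hroot lam' hlam'0 k hk]
    calc a k ≤ (K * lam' ^ k) ^ (1/(k:ℝ)) :=
          Real.rpow_le_rpow (by positivity) hCm (by positivity)
      _ = K ^ (1/(k:ℝ)) * lam' := e2
  -- boundedness
  have hbound_above : Filter.IsBoundedUnder (· ≤ ·) Filter.atTop a := by
    obtain ⟨K, hK, hev⟩ := hupper (m+1) (by linarith)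
    exact ((htendK K hK (m+1)).isBoundedUnder_le).mono_le hev
  have hbound_below : Filter.IsBoundedUnder (· ≥ ·) Filter.atTop a := by
    refine ⟨0, ?_⟩
    rw [Filter.eventually_map]
    exact Filter.Eventually.of_forall (fun k => Real.rpow_nonneg (by positivity) _)
  -- liminf ≥ m
  have hliminf_ge : m ≤ Filter.liminf a Filter.atTop := by
    have h := Filter.liminf_le_liminf hev_low (htc.isBoundedUnder_ge)
      (hbound_above.isCoboundedUnder_ge)
    rwa [htc.liminf_eq] at h
  -- limsup ≤ m
  have hlimsup_le : Filter.limsup a Filter.atTop ≤ m := by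
    by_contra hcon
    push_neg at hcon
    set L := Filter.limsup a Filter.atTop with hL
    have hmid1 : m < (m + L)/2 := by linarith
    have hmid2 : (m + L)/2 < L := by linarith
    obtain ⟨K, hK, hev⟩ := hupper ((m+L)/2) hmid1
    have htend2 := htendK K hK ((m+L)/2)
    have h := Filter.limsup_le_limsup hev (hbound_below.isCoboundedUnder_le)
      (htend2.isBoundedUnder_le)
    rw [htend2.limsup_eq] at h
    rw [← hL] at h
    linarith
  have h3 := Filter.liminf_le_limsup (u := a) (f := Filter.atTop) hbound_above hbound_below
  exact le_antisymm (le_trans h3 hlimsup_le) hliminf_ge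
end

section
/- Let M_1, …, M_k be 2×2 matrices with nonnegative real entries and let M := M_1 M_2 ⋯ M_k. For i, j ∈ [k], let M_{i,j} denote the 2×2 matrix whose first row is the first row of M_i and whose second row is the second row of M_j. If λ ≥ 0 and ρ(M_{i,j}) ≥ λ for all i, j ∈ [k], then ρ(M) ≥ λ^k. -/
open Filter

namespace BSAux

noncomputable def rad (A : Matrix (Fin 2) (Fin 2) ℝ) : ℝ :=
  ((A 0 0 + A 1 1) + Real.sqrt ((A 0 0 - A 1 1)^2 + 4 * (A 0 1 * A 1 0))) / 2

lemma mem_spec_iff (A : Matrix (Fin 2) (Fin 2) ℝ) (μ : ℂ) :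
    μ ∈ spectrum ℂ (A.map Complex.ofReal) ↔
      (μ - A 0 0) * (μ - A 1 1) - A 0 1 * A 1 0 = 0 := by
  rw [spectrum.mem_iff, Matrix.isUnit_iff_isUnit_det, isUnit_iff_ne_zero, not_not,
    Matrix.det_fin_two]
  simp [Matrix.algebraMap_matrix_apply, Matrix.map_apply]

variable {A : Matrix (Fin 2) (Fin 2) ℝ}

lemma sqrtD_nonneg (hA : ∀ s t, 0 ≤ A s t) :
    0 ≤ (A 0 0 - A 1 1)^2 + 4 * (A 0 1 * A 1 0) := by
  have := mul_nonneg (hA 0 1) (hA 1 0); positivity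

lemma rad_ge_diag (hA : ∀ s t, 0 ≤ A s t) : A 0 0 ≤ rad A ∧ A 1 1 ≤ rad A := by
  have h1 : |A 0 0 - A 1 1| ≤ Real.sqrt ((A 0 0 - A 1 1)^2 + 4 * (A 0 1 * A 1 0)) := by
    rw [← Real.sqrt_sq_eq_abs]
    exact Real.sqrt_le_sqrt (by nlinarith [mul_nonneg (hA 0 1) (hA 1 0)])
  rw [abs_le] at h1
  obtain ⟨h1a, h1b⟩ := h1
  constructor <;> (unfold rad; linarith)

lemma rad_nonneg (hA : ∀ s t, 0 ≤ A s t) : 0 ≤ rad A :=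
  le_trans (hA 0 0) (rad_ge_diag hA).1

lemma rad_root (hA : ∀ s t, 0 ≤ A s t) :
    (rad A)^2 - (A 0 0 + A 1 1) * rad A + (A 0 0 * A 1 1 - A 0 1 * A 1 0) = 0 := by
  have h := Real.sq_sqrt (sqrtD_nonneg hA)
  unfold rad; nlinarith [h]

lemma two_rad_ge_trace (hA : ∀ s t, 0 ≤ A s t) : A 0 0 + A 1 1 ≤ 2 * rad A := by
  have := Real.sqrt_nonneg ((A 0 0 - A 1 1)^2 + 4 * (A 0 1 * A 1 0))
  unfold rad; linarith

lemma abs_le_rad (hA : ∀ s t, 0 ≤ A s t) (μ : ℂ)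
    (hμ : μ ∈ spectrum ℂ (A.map Complex.ofReal)) : ‖μ‖ ≤ rad A := by
  rw [mem_spec_iff] at hμ
  have hroot := rad_root hA
  have hfac : (μ - (rad A : ℝ)) * (μ - ((A 0 0 + A 1 1 - rad A : ℝ) : ℂ)) = 0 := by
    have hrootC := congrArg (Complex.ofReal) hroot
    push_cast at hrootC ⊢
    linear_combination hμ - hrootC
  rcases mul_eq_zero.1 hfac with h | h
  · have hμ' : μ = ((rad A : ℝ) : ℂ) := by linear_combination h
    rw [hμ', Complex.norm_real, Real.norm_eq_abs, abs_of_nonneg (rad_nonneg hA)]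
  · have hμ' : μ = ((A 0 0 + A 1 1 - rad A : ℝ) : ℂ) := by linear_combination h
    rw [hμ', Complex.norm_real, Real.norm_eq_abs, abs_le]
    have h2r := two_rad_ge_trace hA
    have := rad_nonneg hA
    have := hA 0 0; have := hA 1 1
    constructor <;> linarith

lemma le_specRad (hA : ∀ s t, 0 ≤ A s t) {l : ℝ} (hl : l ≤ rad A) : l ≤ BS.specRad A := by
  refine le_trans hl (le_csSup ⟨rad A, ?_⟩ ?_)
  · rintro x ⟨μ, hμ, rfl⟩; exact abs_le_rad hA μ hμ
  · refine ⟨(rad A : ℂ), ?_, by rw [Complex.norm_real, Real.norm_eq_abs, abs_of_nonneg (rad_nonneg hA)]⟩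
    rw [mem_spec_iff]
    have h := rad_root hA
    have : (((rad A)^2 - (A 0 0 + A 1 1) * rad A + (A 0 0 * A 1 1 - A 0 1 * A 1 0) : ℝ) : ℂ) = 0 := by
      rw [h]; norm_num
    push_cast at this ⊢
    linear_combination this

lemma specRad_le_rad (hA : ∀ s t, 0 ≤ A s t) : BS.specRad A ≤ rad A :=
  Real.sSup_le (by rintro x ⟨μ, hμ, rfl⟩; exact abs_le_rad hA μ hμ) (rad_nonneg hA)

/-- Collatz–Wielandt direction: a nonneg vector with Au ≥ lu forces l ≤ rad A. -/
lemma le_rad_of_vec (hA : ∀ s t, 0 ≤ A s t) {l u1 u2 : ℝ} (hu1 : 0 ≤ u1) (hu2 : 0 ≤ u2)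
    (hu : 0 < u1 + u2)
    (h1 : l * u1 ≤ A 0 0 * u1 + A 0 1 * u2) (h2 : l * u2 ≤ A 1 0 * u1 + A 1 1 * u2) :
    l ≤ rad A := by
  obtain ⟨ha, hd⟩ := rad_ge_diag hA
  by_contra hlt
  push_neg at hlt
  -- then l > rad A ≥ max diag, so l > a, l > d
  have hla : A 0 0 < l := lt_of_le_of_lt ha hlt
  have hld : A 1 1 < l := lt_of_le_of_lt hd hlt
  -- u1 > 0 and u2 > 0
  have hu1p : 0 < u1 := by
    rcases hu1.lt_or_eq with h | h
    · exact h
    · exfalso; rw [← h] at h2 h1 hu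
      simp at h1 h2
      nlinarith [h2]
  have hu2p : 0 < u2 := by
    rcases hu2.lt_or_eq with h | h
    · exact h
    · exfalso; rw [← h] at h2 h1 hu
      nlinarith [h1]
  -- p(l) ≤ 0
  have hp : (l - A 0 0) * (l - A 1 1) ≤ A 0 1 * A 1 0 := by
    have e1 : (l - A 0 0) * u1 ≤ A 0 1 * u2 := by linarith
    have e2 : (l - A 1 1) * u2 ≤ A 1 0 * u1 := by linarith
    have := mul_le_mul e1 e2 (by nlinarith) (mul_nonneg (hA 0 1) hu2)
    have huu : 0 < u1 * u2 := mul_pos hu1p hu2p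
    nlinarith [this]
  -- but rad A is the larger root, so p(l) > 0 when l > rad A
  have hroot := rad_root hA
  have h2r := two_rad_ge_trace hA
  nlinarith [hp, hroot, hlt, h2r]

/-- Existence of a nonneg (sub)eigenvector when l ≤ rad A. -/
lemma exists_vec (hA : ∀ s t, 0 ≤ A s t) {l : ℝ} (hl0 : 0 ≤ l) (hl : l ≤ rad A) :
    ∃ u1 u2 : ℝ, 0 ≤ u1 ∧ 0 ≤ u2 ∧ 0 < u1 + u2 ∧
      l * u1 ≤ A 0 0 * u1 + A 0 1 * u2 ∧ l * u2 ≤ A 1 0 * u1 + A 1 1 * u2 := by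
  rcases eq_or_lt_of_le (hA 0 1) with hb | hb
  · -- b = 0 : rad A = max of diagonals
    have hrad : rad A = max (A 0 0) (A 1 1) := by
      unfold rad
      rw [← hb]
      rw [show (A 0 0 - A 1 1)^2 + 4 * (0 * A 1 0) = (A 0 0 - A 1 1)^2 by ring,
        Real.sqrt_sq_eq_abs]
      rcases le_total (A 0 0) (A 1 1) with h | h
      · rw [abs_of_nonpos (by linarith), max_eq_right h]; ring
      · rw [abs_of_nonneg (by linarith), max_eq_left h]; ring
    rw [hrad] at hl
    rcases le_max_iff.1 hl with h | h
    · exact ⟨1, 0, by norm_num, le_refl 0, by norm_num, by nlinarith, by nlinarith [hA 1 0]⟩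
    · refine ⟨0, 1, le_refl 0, by norm_num, by norm_num, ?_, ?_⟩
      · rw [← hb]; nlinarith
      · nlinarith
  · -- b > 0 : eigenvector (b, rad A - a)
    refine ⟨A 0 1, rad A - A 0 0, le_of_lt hb, by linarith [(rad_ge_diag hA).1], by nlinarith [(rad_ge_diag hA).1], ?_, ?_⟩
    · have : A 0 0 * A 0 1 + A 0 1 * (rad A - A 0 0) = rad A * A 0 1 := by ring
      rw [this]
      exact mul_le_mul_of_nonneg_right hl (le_of_lt hb)
    · have hroot := rad_root hA
      have key : A 1 0 * A 0 1 + A 1 1 * (rad A - A 0 0) = rad A * (rad A - A 0 0) := by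
        nlinarith [hroot]
      rw [key]
      exact mul_le_mul_of_nonneg_right hl (by linarith [(rad_ge_diag hA).1])

end BSAux

namespace BSAux

/-- up-closedness of the first-row condition -/
lemma upclosed {a b l s s' : ℝ} (hb : 0 ≤ b)
    (h : l * (1 - s) ≤ a * (1 - s) + b * s) (h1 : s ≤ s') (h2 : s' ≤ 1) :
    l * (1 - s') ≤ a * (1 - s') + b * s' := by
  rcases eq_or_lt_of_le (le_trans h1 h2 : s ≤ 1) with hs1 | hs1
  · have : s' = 1 := le_antisymm h2 (hs1 ▸ h1)
    subst this
    nlinarith [hb]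
  · nlinarith [mul_nonneg (by linarith : (0:ℝ) ≤ 1 - s')
        (by linarith : 0 ≤ a * (1 - s) + b * s - l * (1 - s)),
      mul_nonneg (by linarith : (0:ℝ) ≤ s' - s) hb,
      hs1]

/-- down-closedness of the second-row condition -/
lemma downclosed {c d l s s' : ℝ} (hc : 0 ≤ c)
    (h : l * s ≤ c * (1 - s) + d * s) (h1 : s' ≤ s) (h2 : 0 ≤ s') :
    l * s' ≤ c * (1 - s') + d * s' := by
  rcases eq_or_lt_of_le (le_trans h2 h1 : 0 ≤ s) with hs0 | hs0
  · have : s' = 0 := le_antisymm (hs0 ▸ h1) h2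
    subst this
    nlinarith [hc]
  · nlinarith [mul_nonneg h2 (by linarith : 0 ≤ c * (1 - s) + d * s - l * s),
      mul_nonneg (by linarith : (0:ℝ) ≤ s - s') hc,
      hs0]

/-- product of a list of nonneg matrices acting on a common subeigenvector -/
lemma prod_vec {l : ℝ} (hl : 0 ≤ l) {u1 u2 : ℝ} (hu1 : 0 ≤ u1) (hu2 : 0 ≤ u2) :
    ∀ L : List (Matrix (Fin 2) (Fin 2) ℝ),
      (∀ A ∈ L, (∀ s t, 0 ≤ A s t) ∧
        l * u1 ≤ A 0 0 * u1 + A 0 1 * u2 ∧ l * u2 ≤ A 1 0 * u1 + A 1 1 * u2) →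
      (∀ s t, 0 ≤ L.prod s t) ∧
        l ^ L.length * u1 ≤ L.prod 0 0 * u1 + L.prod 0 1 * u2 ∧
        l ^ L.length * u2 ≤ L.prod 1 0 * u1 + L.prod 1 1 * u2
  | [] => by
    intro _
    refine ⟨fun s t => ?_, ?_, ?_⟩ <;> simp [Matrix.one_apply]
    · positivity
    all_goals fin_cases s <;> fin_cases t <;> simp
  | A :: L => by
    intro h
    obtain ⟨hAn, hA1, hA2⟩ := h A List.mem_cons_self
    obtain ⟨hPn, hP1, hP2⟩ := prod_vec hl hu1 hu2 L (fun B hB => h B (List.mem_cons_of_mem A hB))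
    have hmul : ∀ s t : Fin 2, (A :: L).prod s t =
        A s 0 * L.prod 0 t + A s 1 * L.prod 1 t := by
      intro s t
      rw [List.prod_cons, Matrix.mul_apply, Fin.sum_univ_two]
    have hln : 0 ≤ l ^ L.length := pow_nonneg hl _
    refine ⟨fun s t => ?_, ?_, ?_⟩
    · rw [hmul]
      have := hPn 0 t; have := hPn 1 t; have := hAn s 0; have := hAn s 1
      positivity
    · rw [hmul 0 0, hmul 0 1, List.length_cons, pow_succ]
      nlinarith [mul_le_mul_of_nonneg_left hP1 (hAn 0 0),
        mul_le_mul_of_nonneg_left hP2 (hAn 0 1),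
        mul_le_mul_of_nonneg_left hA1 hln]
    · rw [hmul 1 0, hmul 1 1, List.length_cons, pow_succ]
      nlinarith [mul_le_mul_of_nonneg_left hP1 (hAn 1 0),
        mul_le_mul_of_nonneg_left hP2 (hAn 1 1),
        mul_le_mul_of_nonneg_left hA2 hln]

end BSAux

open BS in
/-- Let `M 0, …, M (k-1)` be 2×2 nonnegative real matrices and
`P` their product (in order).  If the "mixed" matrices, whose first row is the first
row of `M i` and second row is the second row of `M j`, all have spectral radius at
least `lam ≥ 0`, then `ρ(P) ≥ lam ^ k`. -/
theorem specRad_prod_ge {k : ℕ} (M : Fin k → Matrix (Fin 2) (Fin 2) ℝ) (lam : ℝ)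
    (hlam : 0 ≤ lam)
    (hnonneg : ∀ i s t, 0 ≤ M i s t)
    (hmix : ∀ i j : Fin k, lam ≤ specRad (Matrix.of ![M i 0, M j 1])) :
    lam ^ k ≤ specRad (List.ofFn M).prod := by
  classical
  -- find a single direction s working for all i
  have key : ∃ s : ℝ, 0 ≤ s ∧ s ≤ 1 ∧ ∀ i : Fin k,
      lam * (1 - s) ≤ M i 0 0 * (1 - s) + M i 0 1 * s ∧
      lam * s ≤ M i 1 0 * (1 - s) + M i 1 1 * s := by
    rcases Nat.eq_zero_or_pos k with hk | hk
    · exact ⟨0, le_refl 0, by norm_num, fun i => absurd i.isLt (by omega)⟩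
    haveI : Nonempty (Fin k) := ⟨⟨0, hk⟩⟩
    have pair : ∀ i j : Fin k, ∃ s : ℝ, 0 ≤ s ∧ s ≤ 1 ∧
        (lam * (1 - s) ≤ M i 0 0 * (1 - s) + M i 0 1 * s) ∧
        (lam * s ≤ M j 1 0 * (1 - s) + M j 1 1 * s) := by
      intro i j
      set X : Matrix (Fin 2) (Fin 2) ℝ := Matrix.of ![M i 0, M j 1] with hX
      have hXn : ∀ s t, 0 ≤ X s t := by
        intro s t
        fin_cases s <;> simp [hX, Matrix.of_apply] <;> apply hnonneg
      have hXe : X 0 0 = M i 0 0 ∧ X 0 1 = M i 0 1 ∧ X 1 0 = M j 1 0 ∧ X 1 1 = M j 1 1 := by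
        refine ⟨?_, ?_, ?_, ?_⟩ <;> simp [hX, Matrix.of_apply]
      obtain ⟨he1, he2, he3, he4⟩ := hXe
      have hrad : lam ≤ BSAux.rad X := le_trans (hmix i j) (BSAux.specRad_le_rad hXn)
      obtain ⟨u1, u2, hu1, hu2, hupos, h1, h2⟩ := BSAux.exists_vec hXn hlam hrad
      rw [he1, he2] at h1
      rw [he3, he4] at h2
      refine ⟨u2 / (u1 + u2), by positivity, by rw [div_le_one hupos]; linarith, ?_, ?_⟩
      · have e : 1 - u2 / (u1 + u2) = u1 / (u1 + u2) := by field_simp; ring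
        rw [e, div_eq_mul_inv, div_eq_mul_inv]
        have := mul_le_mul_of_nonneg_right h1 (inv_nonneg.2 hupos.le)
        nlinarith [this]
      · have e : 1 - u2 / (u1 + u2) = u1 / (u1 + u2) := by field_simp; ring
        rw [e, div_eq_mul_inv, div_eq_mul_inv]
        have := mul_le_mul_of_nonneg_right h2 (inv_nonneg.2 hupos.le)
        nlinarith [this]
    choose t ht0 ht1 htf htg using pair
    have hne : (Finset.univ : Finset (Fin k)).Nonempty := Finset.univ_nonempty
    refine ⟨Finset.univ.sup' hne (fun i => Finset.univ.inf' hne (fun j => t i j)), ?_, ?_, ?_⟩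
    · obtain ⟨i0, -, hi0⟩ := Finset.exists_mem_eq_sup' hne
        (fun i => Finset.univ.inf' hne (fun j => t i j))
      rw [hi0]
      obtain ⟨j0, -, hj0⟩ := Finset.exists_mem_eq_inf' hne (fun j => t i0 j)
      rw [hj0]; exact ht0 i0 j0
    · apply Finset.sup'_le
      intro i _
      obtain ⟨j0, -, hj0⟩ := Finset.exists_mem_eq_inf' hne (fun j => t i j)
      rw [hj0]; exact ht1 i j0
    · intro i
      set S := Finset.univ.sup' hne (fun i => Finset.univ.inf' hne (fun j => t i j)) with hS
      have hSle1 : S ≤ 1 := by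
        apply Finset.sup'_le
        intro i' _
        obtain ⟨j0, -, hj0⟩ := Finset.exists_mem_eq_inf' hne (fun j => t i' j)
        rw [hj0]; exact ht1 i' j0
      have hS0 : 0 ≤ S := by
        rw [hS]
        obtain ⟨i0, -, hi0⟩ := Finset.exists_mem_eq_sup' hne
          (fun i => Finset.univ.inf' hne (fun j => t i j))
        rw [hi0]
        obtain ⟨j0, -, hj0⟩ := Finset.exists_mem_eq_inf' hne (fun j => t i0 j)
        rw [hj0]; exact ht0 i0 j0
      constructor
      · -- first row: use that S ≥ inf over j of t i j, which is some t i j0 ∈ S_i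
        obtain ⟨j0, -, hj0⟩ := Finset.exists_mem_eq_inf' hne (fun j => t i j)
        have hle : t i j0 ≤ S := by
          rw [hS, ← hj0]
          exact Finset.le_sup' (fun i' => Finset.univ.inf' hne (fun j => t i' j))
            (Finset.mem_univ i)
        exact BSAux.upclosed (hnonneg i 0 1) (htf i j0) hle hSle1
      · -- second row: S = inf over j of t i0 j ≤ t i0 i ∈ T_i
        obtain ⟨i0, -, hi0⟩ := Finset.exists_mem_eq_sup' hne
          (fun i => Finset.univ.inf' hne (fun j => t i j))
        have hle : S ≤ t i0 i := by
          rw [hS, hi0]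
          exact Finset.inf'_le _ (Finset.mem_univ i)
        exact BSAux.downclosed (hnonneg i 1 0) (htg i0 i) hle hS0
  obtain ⟨s, hs0, hs1, hall⟩ := key
  -- apply the product lemma with u = (1 - s, s)
  have hprod := BSAux.prod_vec hlam (by linarith : (0:ℝ) ≤ 1 - s) hs0 (List.ofFn M) ?_
  · obtain ⟨hPn, hP1, hP2⟩ := hprod
    rw [List.length_ofFn] at hP1 hP2
    exact BSAux.le_specRad hPn
      (BSAux.le_rad_of_vec hPn (by linarith) hs0 (by linarith) hP1 hP2)
  · intro A hA
    obtain ⟨i, rfl⟩ := List.mem_ofFn.1 hA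
    exact ⟨hnonneg i, (hall i).1, (hall i).2⟩
end

section
/- Let U_1, …, U_k, V_1, …, V_k be compact subsets of ℝ²_{≥0} and λ ≥ 0 such that for each i, j ∈ [k] there exist u_{i,j} ∈ U_i and v_{i,j} ∈ V_j with ρ([u_{i,j}; v_{i,j}]) ≤ λ, where [u; v] denotes the 2×2 matrix with first row u and second row v. Then there exist u_i ∈ U_i and v_i ∈ V_i for each i ∈ [k] such that, setting M_i := [u_i; v_i], for every pair i ≤ j in [k] the product M^{[i,j]} := M_i M_{i+1} ⋯ M_j satisfies ρ(M^{[i,j]}) ≤ λ^{j−i+1}. -/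
open Filter

section Aux

open BS

lemma specRad_eq (A : Matrix (Fin 2) (Fin 2) ℝ) :
    specRad A = sSup {r | ∃ μ : ℂ, μ ∈ spectrum ℂ (A.map Complex.ofReal) ∧ r = ‖μ‖} :=
  rfl

lemma eigvec (A : Matrix (Fin 2) (Fin 2) ℝ) (μ : ℂ)
    (hμ : μ ∈ spectrum ℂ (A.map Complex.ofReal)) :
    ∃ z : Fin 2 → ℂ, z ≠ 0 ∧ ∀ x, μ * z x = (A x 0 : ℂ) * z 0 + (A x 1 : ℂ) * z 1 := by
  rw [spectrum.mem_iff] at hμ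
  have hdet : (algebraMap ℂ (Matrix (Fin 2) (Fin 2) ℂ) μ - A.map Complex.ofReal).det = 0 := by
    by_contra h
    exact hμ ((Matrix.isUnit_iff_isUnit_det _).mpr (isUnit_iff_ne_zero.mpr h))
  obtain ⟨z, hz, hz0⟩ := (Matrix.exists_mulVec_eq_zero_iff).mpr hdet
  refine ⟨z, hz, fun x => ?_⟩
  rw [Matrix.sub_mulVec] at hz0
  have h2 : (algebraMap ℂ (Matrix (Fin 2) (Fin 2) ℂ) μ).mulVec z = μ • z := by
    funext x
    simp [Matrix.algebraMap_eq_diagonal, Matrix.mulVec_diagonal]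
  rw [h2] at hz0
  have h3 := congrFun (sub_eq_zero.mp hz0).symm x
  simpa [Matrix.mulVec, dotProduct, Fin.sum_univ_two] using h3.symm

lemma sr_le_of_forall (A : Matrix (Fin 2) (Fin 2) ℝ) (l : ℝ) (hl : 0 ≤ l)
    (h : ∀ μ ∈ spectrum ℂ (A.map Complex.ofReal), ‖μ‖ ≤ l) : specRad A ≤ l := by
  rw [specRad_eq]
  apply Real.sSup_le _ hl
  rintro r ⟨μ, hμ, rfl⟩
  exact h μ hμ

lemma L1 (A : Matrix (Fin 2) (Fin 2) ℝ) (l t0 t1 : ℝ)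
    (hA : ∀ x y, 0 ≤ A x y) (hp0 : 0 < t0) (hp1 : 0 < t1)
    (h0 : A 0 0 * t0 + A 0 1 * t1 ≤ l * t0)
    (h1 : A 1 0 * t0 + A 1 1 * t1 ≤ l * t1) : specRad A ≤ l := by
  have hl : 0 ≤ l := by nlinarith [hA 0 0, hA 0 1]
  apply sr_le_of_forall _ _ hl
  intro μ hμ
  obtain ⟨z, hz, hzeq⟩ := eigvec A μ hμ
  set y : Fin 2 → ℝ := fun x => ‖z x‖ with hy
  have hy0 : 0 ≤ y 0 := norm_nonneg _
  have hy1 : 0 ≤ y 1 := norm_nonneg _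
  have key : ∀ x, ‖μ‖ * y x ≤ A x 0 * y 0 + A x 1 * y 1 := by
    intro x
    have := hzeq x
    calc ‖μ‖ * y x = ‖μ * z x‖ := by rw [norm_mul]
    _ = ‖(A x 0 : ℂ) * z 0 + (A x 1 : ℂ) * z 1‖ := by rw [this]
    _ ≤ ‖(A x 0 : ℂ) * z 0‖ + ‖(A x 1 : ℂ) * z 1‖ :=
        norm_add_le _ _
    _ = A x 0 * y 0 + A x 1 * y 1 := by
        simp [hy, norm_mul, Complex.norm_real, Real.norm_eq_abs, abs_of_nonneg (hA x 0), abs_of_nonneg (hA x 1)]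
  have hne : 0 < y 0 ∨ 0 < y 1 := by
    by_contra h
    push_neg at h
    apply hz
    funext x
    have e0 : z 0 = 0 := norm_eq_zero.mp (le_antisymm (h.1) hy0)
    have e1 : z 1 = 0 := norm_eq_zero.mp (le_antisymm (h.2) hy1)
    fin_cases x <;> simp [e0, e1]
  have k0 := key 0
  have k1 := key 1
  have habs : 0 ≤ ‖μ‖ := norm_nonneg _
  rcases le_total (y 0 * t1) (y 1 * t0) with hc | hc
  · have hy1pos : 0 < y 1 := by
      rcases hne with h | h
      · nlinarith
      · exact h
    nlinarith [mul_pos hy1pos hp1, hA 1 0, hA 1 1]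
  · have hy0pos : 0 < y 0 := by
      rcases hne with h | h
      · exact h
      · nlinarith
    nlinarith [mul_pos hy0pos hp0, hA 0 0, hA 0 1]

lemma char_eq (A : Matrix (Fin 2) (Fin 2) ℝ) (μ : ℂ) :
    (algebraMap ℂ (Matrix (Fin 2) (Fin 2) ℂ) μ - A.map Complex.ofReal).det
      = (μ - (A 0 0 : ℂ)) * (μ - (A 1 1 : ℂ)) - (A 0 1 : ℂ) * (A 1 0 : ℂ) := by
  simp [Matrix.det_fin_two, Matrix.algebraMap_eq_diagonal, Matrix.diagonal]

lemma mem_spec_iff (A : Matrix (Fin 2) (Fin 2) ℝ) (μ : ℂ) :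
    μ ∈ spectrum ℂ (A.map Complex.ofReal) ↔
      (μ - (A 0 0 : ℂ)) * (μ - (A 1 1 : ℂ)) - (A 0 1 : ℂ) * (A 1 0 : ℂ) = 0 := by
  rw [spectrum.mem_iff, Matrix.isUnit_iff_isUnit_det, isUnit_iff_ne_zero, not_not, char_eq]

lemma L2a (A : Matrix (Fin 2) (Fin 2) ℝ) (l : ℝ) (hl : 0 ≤ l)
    (h01 : A 0 1 = 0 ∨ A 1 0 = 0)
    (ha : |A 0 0| ≤ l) (hd : |A 1 1| ≤ l) : specRad A ≤ l := by
  apply sr_le_of_forall _ _ hl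
  intro μ hμ
  rw [mem_spec_iff] at hμ
  have h2 : (μ - (A 0 0 : ℂ)) * (μ - (A 1 1 : ℂ)) = 0 := by
    rcases h01 with h | h <;> rw [h] at hμ <;> push_cast at hμ <;> linear_combination hμ
  rcases mul_eq_zero.mp h2 with h | h
  · rw [sub_eq_zero.mp h]
    rwa [Complex.norm_real, Real.norm_eq_abs]
  · rw [sub_eq_zero.mp h]
    rwa [Complex.norm_real, Real.norm_eq_abs]

lemma L3 (A : Matrix (Fin 2) (Fin 2) ℝ) (l : ℝ) (hl : 0 ≤ l)
    (hA : ∀ x y, 0 ≤ A x y) (h : specRad A ≤ l) :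
    A 0 0 ≤ l ∧ A 1 1 ≤ l ∧ A 0 1 * A 1 0 ≤ (l - A 0 0) * (l - A 1 1) := by
  set a := A 0 0; set b := A 0 1; set c := A 1 0; set d := A 1 1
  have ha := hA 0 0; have hb := hA 0 1; have hc := hA 1 0; have hd := hA 1 1
  set Δ : ℝ := (a - d)^2 + 4 * (b * c) with hΔdef
  have hΔ : 0 ≤ Δ := by positivity
  set s := Real.sqrt Δ with hsdef
  have hs0 : 0 ≤ s := Real.sqrt_nonneg _
  have hs2 : s ^ 2 = Δ := Real.sq_sqrt hΔ
  have hsabs : |a - d| ≤ s := by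
    rw [hsdef]
    rw [← Real.sqrt_sq_eq_abs]
    apply Real.sqrt_le_sqrt
    nlinarith
  set μp : ℝ := (a + d + s) / 2 with hμp
  set μm : ℝ := (a + d - s) / 2 with hμm
  have hμp0 : 0 ≤ μp := by
    have : |a - d| ≤ a + d + s := by nlinarith [abs_nonneg (a-d)]
    nlinarith
  have hsum : μp + μm = a + d := by rw [hμp, hμm]; ring
  have hprodr : μp * μm = a * d - b * c := by rw [hμp, hμm]; nlinarith
  have hmemp : (μp : ℂ) ∈ spectrum ℂ (A.map Complex.ofReal) := by
    rw [mem_spec_iff]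
    have : (μp - a) * (μp - d) - b * c = 0 := by nlinarith
    exact_mod_cast congrArg (Complex.ofReal) this
  have hall : ∀ μ ∈ spectrum ℂ (A.map Complex.ofReal), ‖μ‖ ≤ μp := by
    intro μ hμ
    rw [mem_spec_iff] at hμ
    have hfac : (μ - (μp : ℂ)) * (μ - (μm : ℂ)) = 0 := by
      have e1 : ((μp : ℂ)) + μm = (a : ℂ) + d := by exact_mod_cast congrArg Complex.ofReal hsum
      have e2 : ((μp : ℂ)) * μm = (a : ℂ) * d - b * c := by
        exact_mod_cast congrArg Complex.ofReal hprodr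
      linear_combination hμ - μ * e1 + e2
    rcases mul_eq_zero.mp hfac with h' | h'
    · rw [sub_eq_zero.mp h', Complex.norm_real, Real.norm_eq_abs, abs_of_nonneg hμp0]
    · rw [sub_eq_zero.mp h', Complex.norm_real, Real.norm_eq_abs]
      rw [hμm, abs_le]
      constructor <;> nlinarith [abs_nonneg (a-d)]
  have hbdd : BddAbove {r | ∃ μ : ℂ, μ ∈ spectrum ℂ (A.map Complex.ofReal) ∧ r = ‖μ‖} := by
    refine ⟨μp, ?_⟩
    rintro r ⟨μ, hμ, rfl⟩
    exact hall μ hμ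
  have hle : μp ≤ specRad A := by
    rw [specRad_eq]
    apply le_csSup hbdd
    exact ⟨μp, hmemp, by rw [Complex.norm_real, Real.norm_eq_abs, abs_of_nonneg hμp0]⟩
  have hμpl : μp ≤ l := le_trans hle h
  have hsl : s ≤ 2 * l - (a + d) := by rw [hμp] at hμpl; linarith
  have habs2 : |a - d| ≤ 2 * l - (a + d) := le_trans hsabs hsl
  rw [abs_le] at habs2
  refine ⟨by linarith, by linarith, ?_⟩
  nlinarith

lemma prod_inv (lam t0 t1 : ℝ) (hlam : 0 ≤ lam) (ht0 : 0 ≤ t0) (ht1 : 0 ≤ t1)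
    (hsum : t0 + t1 = 1) :
    ∀ l : List (Matrix (Fin 2) (Fin 2) ℝ),
      (∀ M ∈ l, (∀ x y, 0 ≤ M x y) ∧ M 0 0 * t0 + M 0 1 * t1 ≤ lam * t0 ∧
        M 1 0 * t0 + M 1 1 * t1 ≤ lam * t1 ∧ M 0 0 ≤ lam ∧ M 1 1 ≤ lam) →
      (∀ x y, 0 ≤ l.prod x y) ∧
      l.prod 0 0 * t0 + l.prod 0 1 * t1 ≤ lam ^ l.length * t0 ∧
      l.prod 1 0 * t0 + l.prod 1 1 * t1 ≤ lam ^ l.length * t1 ∧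
      (t0 = 0 → l.prod 0 1 = 0 ∧ l.prod 0 0 ≤ lam ^ l.length ∧ l.prod 1 1 ≤ lam ^ l.length) ∧
      (t1 = 0 → l.prod 1 0 = 0 ∧ l.prod 0 0 ≤ lam ^ l.length ∧ l.prod 1 1 ≤ lam ^ l.length) := by
  intro l
  induction l with
  | nil =>
    intro _
    simp only [List.prod_nil, List.length_nil, pow_zero]
    refine ⟨fun x y => ?_, by simp [Matrix.one_apply], by simp [Matrix.one_apply],
      fun h0 => ?_, fun h1 => ?_⟩
    · rw [Matrix.one_apply]; split <;> norm_num
    · simp [Matrix.one_apply]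
    · simp [Matrix.one_apply]
  | cons M l ih =>
    intro hall
    obtain ⟨hMnn, hMr0, hMr1, hM00, hM11⟩ := hall M List.mem_cons_self
    obtain ⟨hPnn, hPr0, hPr1, hPd0, hPd1⟩ := ih (fun N hN => hall N (List.mem_cons_of_mem _ hN))
    set P := l.prod with hP
    set n := l.length with hn
    have hln : 0 ≤ lam ^ n := pow_nonneg hlam n
    have hmul : ∀ x y, (List.prod (M :: l)) x y = M x 0 * P 0 y + M x 1 * P 1 y := by
      intro x y
      rw [List.prod_cons, Matrix.mul_apply, Fin.sum_univ_two]
    have hlen : (M :: l).length = n + 1 := by simp [hn]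
    rw [hlen]
    refine ⟨fun x y => ?_, ?_, ?_, ?_, ?_⟩
    · rw [hmul]
      exact add_nonneg (mul_nonneg (hMnn x 0) (hPnn 0 y)) (mul_nonneg (hMnn x 1) (hPnn 1 y))
    · rw [hmul 0 0, hmul 0 1, pow_succ]
      nlinarith [mul_le_mul_of_nonneg_left hPr0 (hMnn 0 0),
        mul_le_mul_of_nonneg_left hPr1 (hMnn 0 1),
        mul_le_mul_of_nonneg_left hMr0 hln]
    · rw [hmul 1 0, hmul 1 1, pow_succ]
      nlinarith [mul_le_mul_of_nonneg_left hPr0 (hMnn 1 0),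
        mul_le_mul_of_nonneg_left hPr1 (hMnn 1 1),
        mul_le_mul_of_nonneg_left hMr1 hln]
    · intro h0
      obtain ⟨hP01, hP00, hP11⟩ := hPd0 h0
      have ht1' : t1 = 1 := by linarith
      have hM01 : M 0 1 = 0 := by
        have := hMr0; rw [h0, ht1'] at this
        nlinarith [hMnn 0 1]
      rw [hmul 0 1, hmul 0 0, hmul 1 1, pow_succ, hP01, hM01]
      refine ⟨by ring, ?_, ?_⟩
      · nlinarith [mul_le_mul hM00 hP00 (hPnn 0 0) hlam]
      · nlinarith [mul_le_mul hM11 hP11 (hPnn 1 1) hlam]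
    · intro h1
      obtain ⟨hP10, hP00, hP11⟩ := hPd1 h1
      have ht0' : t0 = 1 := by linarith
      have hM10 : M 1 0 = 0 := by
        have := hMr1; rw [h1, ht0'] at this
        nlinarith [hMnn 1 0]
      rw [hmul 1 0, hmul 0 0, hmul 1 1, pow_succ, hP10, hM10]
      refine ⟨by ring, ?_, ?_⟩
      · nlinarith [mul_le_mul hM00 hP00 (hPnn 0 0) hlam]
      · nlinarith [mul_le_mul hM11 hP11 (hPnn 1 1) hlam]

end Aux

open BS in
/-- Given compact subsets `U 0, …, U (k-1), V 0, …, V (k-1)` of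
`ℝ²_{≥0}` such that for all `i, j < k` some matrix `[u; v]` with `u ∈ U i`,
`v ∈ V j` has spectral radius at most `lam ≥ 0`, one can choose `u i ∈ U i` and
`v i ∈ V i` so that, with `M i := [u i; v i]`, every product
`M i * M (i+1) * ⋯ * M j` (for `i ≤ j < k`) has spectral radius at most
`lam ^ (j - i + 1)`. -/
theorem specRad_prod_le (k : ℕ) (U V : ℕ → Set (Fin 2 → ℝ)) (lam : ℝ) (hlam : 0 ≤ lam)
    (hUc : ∀ i < k, IsCompact (U i)) (hVc : ∀ i < k, IsCompact (V i))
    (hUnn : ∀ i < k, ∀ u ∈ U i, ∀ t, 0 ≤ u t)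
    (hVnn : ∀ i < k, ∀ v ∈ V i, ∀ t, 0 ≤ v t)
    (hmix : ∀ i < k, ∀ j < k, ∃ u ∈ U i, ∃ v ∈ V j,
      specRad (Matrix.of ![u, v]) ≤ lam) :
    ∃ u v : ℕ → (Fin 2 → ℝ), (∀ i < k, u i ∈ U i) ∧ (∀ i < k, v i ∈ V i) ∧
      ∀ i j : ℕ, i ≤ j → j < k →
        specRad ((List.ofFn (fun t : Fin (j - i + 1) =>
            Matrix.of ![u (i + (t : ℕ)), v (i + (t : ℕ))])).prod)
          ≤ lam ^ (j - i + 1) := by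
  classical
  rcases Nat.eq_zero_or_pos k with hk0 | hkpos
  · subst hk0
    exact ⟨fun _ => 0, fun _ => 0, by simp, by simp, fun i j hij hj => absurd hj (by omega)⟩
  -- entry computations for [u; v]
  have hof00 : ∀ u v : Fin 2 → ℝ, (Matrix.of ![u, v]) 0 0 = u 0 := fun u v => rfl
  have hof01 : ∀ u v : Fin 2 → ℝ, (Matrix.of ![u, v]) 0 1 = u 1 := fun u v => rfl
  have hof10 : ∀ u v : Fin 2 → ℝ, (Matrix.of ![u, v]) 1 0 = v 0 := fun u v => rfl
  have hof11 : ∀ u v : Fin 2 → ℝ, (Matrix.of ![u, v]) 1 1 = v 1 := fun u v => rfl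
  -- consequences of hmix via the lower bound lemma
  have key : ∀ i < k, ∀ j < k, ∃ u ∈ U i, ∃ v ∈ V j,
      u 0 ≤ lam ∧ v 1 ≤ lam ∧ u 1 * v 0 ≤ (lam - u 0) * (lam - v 1) := by
    intro i hi j hj
    obtain ⟨u, hu, v, hv, hsp⟩ := hmix i hi j hj
    have hA : ∀ x y, (0:ℝ) ≤ (Matrix.of ![u, v]) x y := by
      intro x y
      fin_cases x
      · exact hUnn i hi u hu y
      · exact hVnn j hj v hv y
    obtain ⟨h1, h2, h3⟩ := L3 _ lam hlam hA hsp
    exact ⟨u, hu, v, hv, h1, h2, h3⟩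
  -- the feasibility interval construction for a single pair
  have pairT : ∀ a b c d : ℝ, 0 ≤ a → 0 ≤ b → 0 ≤ c → 0 ≤ d → a ≤ lam → d ≤ lam →
      b * c ≤ (lam - a) * (lam - d) →
      ∃ t, 0 ≤ t ∧ t ≤ 1 ∧ a * (1 - t) + b * t ≤ lam * (1 - t) ∧
        c * (1 - t) + d * t ≤ lam * t := by
    intro a b c d ha hb hc hd hal hdl hbc
    by_cases hD : c + (lam - d) ≤ 0
    · have hc0 : c = 0 := le_antisymm (by linarith) hc
      exact ⟨0, le_refl 0, zero_le_one, by norm_num; linarith, by rw [hc0]; norm_num⟩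
    · push_neg at hD
      set D := c + (lam - d) with hDdef
      have hDne : D ≠ 0 := ne_of_gt hD
      have h1t : 1 - c / D = (lam - d) / D := by field_simp; ring
      refine ⟨c / D, by positivity, ?_, ?_, ?_⟩
      · rw [div_le_one hD]; linarith
      · rw [h1t]
        have e1 : a * ((lam - d) / D) + b * (c / D) = (a * (lam - d) + b * c) / D := by ring
        have e2 : lam * ((lam - d) / D) = (lam * (lam - d)) / D := by ring
        rw [e1, e2, div_le_div_iff₀ hD hD]
        nlinarith
      · rw [h1t]
        have e1 : c * ((lam - d) / D) + d * (c / D) = lam * (c / D) := by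
          field_simp; ring
        rw [e1]
  -- the sets B j of feasible parameters for V j
  set Bset : ℕ → Set ℝ := fun j => {t | t ∈ Set.Icc (0:ℝ) 1 ∧ ∃ v ∈ V j, v 1 ≤ lam ∧
    v 0 * (1 - t) + v 1 * t ≤ lam * t} with hBsetdef
  have hBc : ∀ j < k, IsCompact (Bset j) := by
    intro j hj
    have h1 : IsCompact ((V j ×ˢ Set.Icc (0:ℝ) 1) ∩ {q : (Fin 2 → ℝ) × ℝ |
        q.1 1 ≤ lam ∧ q.1 0 * (1 - q.2) + q.1 1 * q.2 ≤ lam * q.2}) := by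
      apply IsCompact.inter_right ((hVc j hj).prod isCompact_Icc)
      have c1 : Continuous fun q : (Fin 2 → ℝ) × ℝ => q.1 1 :=
        (continuous_apply 1).comp continuous_fst
      have c0 : Continuous fun q : (Fin 2 → ℝ) × ℝ => q.1 0 :=
        (continuous_apply 0).comp continuous_fst
      apply IsClosed.inter
      · exact isClosed_le c1 continuous_const
      · exact isClosed_le ((c0.mul (continuous_const.sub continuous_snd)).add
          (c1.mul continuous_snd)) (continuous_const.mul continuous_snd)
    have h2 : Bset j = Prod.snd '' ((V j ×ˢ Set.Icc (0:ℝ) 1) ∩ {q : (Fin 2 → ℝ) × ℝ |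
        q.1 1 ≤ lam ∧ q.1 0 * (1 - q.2) + q.1 1 * q.2 ≤ lam * q.2}) := by
      ext t
      constructor
      · rintro ⟨htI, v, hv, hvl, hineq⟩
        exact ⟨(v, t), ⟨⟨hv, htI⟩, hvl, hineq⟩, rfl⟩
      · rintro ⟨⟨v, t'⟩, ⟨⟨hv, htI⟩, hvl, hineq⟩, rfl⟩
        exact ⟨htI, v, hv, hvl, hineq⟩
    rw [h2]
    exact h1.image continuous_snd
  have hBne : ∀ j < k, (Bset j).Nonempty := by
    intro j hj
    obtain ⟨u, hu, v, hv, h1, h2, h3⟩ := key j hj j hj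
    obtain ⟨t, ht0, ht1, hta, htb⟩ := pairT (u 0) (u 1) (v 0) (v 1)
      (hUnn j hj u hu 0) (hUnn j hj u hu 1) (hVnn j hj v hv 0) (hVnn j hj v hv 1) h1 h2 h3
    exact ⟨t, ⟨ht0, ht1⟩, v, hv, h2, htb⟩
  set σ : ℕ → ℝ := fun j => sInf (Bset j) with hσdef
  have hσmem : ∀ j < k, σ j ∈ Bset j := fun j hj => (hBc j hj).sInf_mem (hBne j hj)
  have hBbdd : ∀ j, BddBelow (Bset j) := fun j => ⟨0, fun x hx => hx.1.1⟩
  set T : Finset ℝ := (Finset.range k).image σ with hTdef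
  have hTne : T.Nonempty := ⟨σ 0, Finset.mem_image_of_mem _ (Finset.mem_range.mpr hkpos)⟩
  set tstar := T.max' hTne with htsdef
  obtain ⟨j0, hj0k, hj0⟩ : ∃ j0 < k, σ j0 = tstar := by
    obtain ⟨j0, h1, h2⟩ := Finset.mem_image.mp (T.max'_mem hTne)
    exact ⟨j0, Finset.mem_range.mp h1, h2⟩
  have hσle : ∀ j < k, σ j ≤ tstar :=
    fun j hj => T.le_max' _ (Finset.mem_image_of_mem _ (Finset.mem_range.mpr hj))
  have htstar0 : 0 ≤ tstar := hj0 ▸ (hσmem j0 hj0k).1.1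
  have htstar1 : tstar ≤ 1 := hj0 ▸ (hσmem j0 hj0k).1.2
  -- tstar is feasible for every V j (upward closedness)
  have hBt : ∀ j < k, ∃ v ∈ V j, v 1 ≤ lam ∧
      v 0 * (1 - tstar) + v 1 * tstar ≤ lam * tstar := by
    intro j hj
    obtain ⟨⟨h0, h1⟩, v, hv, hvl, hineq⟩ := hσmem j hj
    refine ⟨v, hv, hvl, ?_⟩
    have hc := hVnn j hj v hv 0
    have hle := hσle j hj
    rcases eq_or_lt_of_le h0 with ht0 | ht0
    · have hc0 : v 0 = 0 := by nlinarith [hVnn j hj v hv 1]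
      rw [hc0]
      nlinarith
    · nlinarith [mul_le_mul_of_nonneg_right hineq htstar0,
        mul_nonneg hc (sub_nonneg.mpr hle)]
  -- tstar is feasible for every U i (downward closedness via column j0)
  have hUt : ∀ i < k, ∃ u ∈ U i, u 0 ≤ lam ∧
      u 0 * (1 - tstar) + u 1 * tstar ≤ lam * (1 - tstar) := by
    intro i hi
    obtain ⟨u, hu, v, hv, h1, h2, h3⟩ := key i hi j0 hj0k
    obtain ⟨t, ht0, ht1, hta, htb⟩ := pairT (u 0) (u 1) (v 0) (v 1)
      (hUnn i hi u hu 0) (hUnn i hi u hu 1) (hVnn j0 hj0k v hv 0) (hVnn j0 hj0k v hv 1) h1 h2 h3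
    have htB : t ∈ Bset j0 := ⟨⟨ht0, ht1⟩, v, hv, h2, htb⟩
    have hts : tstar ≤ t := hj0 ▸ csInf_le (hBbdd j0) htB
    refine ⟨u, hu, h1, ?_⟩
    have hb := hUnn i hi u hu 1
    rcases eq_or_lt_of_le ht1 with hte | hte
    · have hb0 : u 1 = 0 := by nlinarith [hUnn i hi u hu 0]
      rw [hb0]
      nlinarith
    · nlinarith [mul_le_mul_of_nonneg_right hta (by linarith : (0:ℝ) ≤ 1 - tstar),
        mul_nonneg hb (sub_nonneg.mpr hts)]
  -- choose the witnesses
  have exU : ∀ i, ∃ w : Fin 2 → ℝ, i < k → w ∈ U i ∧ w 0 ≤ lam ∧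
      w 0 * (1 - tstar) + w 1 * tstar ≤ lam * (1 - tstar) := by
    intro i
    by_cases hi : i < k
    · obtain ⟨w, h1, h2, h3⟩ := hUt i hi
      exact ⟨w, fun _ => ⟨h1, h2, h3⟩⟩
    · exact ⟨0, fun h => absurd h hi⟩
  have exV : ∀ i, ∃ w : Fin 2 → ℝ, i < k → w ∈ V i ∧ w 1 ≤ lam ∧
      w 0 * (1 - tstar) + w 1 * tstar ≤ lam * tstar := by
    intro i
    by_cases hi : i < k
    · obtain ⟨w, h1, h2, h3⟩ := hBt i hi
      exact ⟨w, fun _ => ⟨h1, h2, h3⟩⟩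
    · exact ⟨0, fun h => absurd h hi⟩
  choose uf huf using exU
  choose vf hvf using exV
  refine ⟨uf, vf, fun i hi => (huf i hi).1, fun i hi => (hvf i hi).1, ?_⟩
  intro i j hij hjk
  set l := List.ofFn (fun t : Fin (j - i + 1) =>
    Matrix.of ![uf (i + (t : ℕ)), vf (i + (t : ℕ))]) with hldef
  have hlen : l.length = j - i + 1 := by rw [hldef, List.length_ofFn]
  have hall : ∀ M ∈ l, (∀ x y, (0:ℝ) ≤ M x y) ∧
      M 0 0 * (1 - tstar) + M 0 1 * tstar ≤ lam * (1 - tstar) ∧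
      M 1 0 * (1 - tstar) + M 1 1 * tstar ≤ lam * tstar ∧ M 0 0 ≤ lam ∧ M 1 1 ≤ lam := by
    intro M hM
    rw [hldef, List.mem_ofFn] at hM
    obtain ⟨t, rfl⟩ := hM
    have hik : i + (t : ℕ) < k := by
      have := t.isLt
      omega
    obtain ⟨hu1, hu2, hu3⟩ := huf (i + (t : ℕ)) hik
    obtain ⟨hv1, hv2, hv3⟩ := hvf (i + (t : ℕ)) hik
    refine ⟨?_, ?_, ?_, ?_, ?_⟩
    · intro x y
      fin_cases x
      · exact hUnn _ hik _ hu1 y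
      · exact hVnn _ hik _ hv1 y
    · exact hu3
    · exact hv3
    · exact hu2
    · exact hv2
  obtain ⟨hnn, hr0, hr1, hd0, hd1⟩ := prod_inv lam (1 - tstar) tstar hlam
    (by linarith) htstar0 (by ring) l hall
  rw [hlen] at hr0 hr1 hd0 hd1
  have hpow : (0:ℝ) ≤ lam ^ (j - i + 1) := pow_nonneg hlam _
  rcases eq_or_lt_of_le htstar0 with h0 | h0
  · obtain ⟨hP10, hP00, hP11⟩ := hd1 h0.symm
    exact L2a _ _ hpow (Or.inr hP10)
      (by rw [abs_of_nonneg (hnn 0 0)]; exact hP00)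
      (by rw [abs_of_nonneg (hnn 1 1)]; exact hP11)
  · rcases eq_or_lt_of_le htstar1 with h1 | h1
    · obtain ⟨hP01, hP00, hP11⟩ := hd0 (by rw [h1]; ring)
      exact L2a _ _ hpow (Or.inl hP01)
        (by rw [abs_of_nonneg (hnn 0 0)]; exact hP00)
        (by rw [abs_of_nonneg (hnn 1 1)]; exact hP11)
    · exact L1 _ _ (1 - tstar) tstar hnn (by linarith) h0 hr0 hr1
end

section
/- Let U_1, …, U_k, V_1, …, V_k be compact subsets of ℝ²_{≥0}, all of whose vectors have every coordinate at most n, and let λ ≥ 0 be such that for each i, j ∈ [k] there exist u ∈ U_i and v ∈ V_j with ρ([u; v]) ≤ λ. Then there exist u_i ∈ U_i and v_i ∈ V_i for each i ∈ [k] such that, setting M_i := [u_i; v_i], the product M := M_1 M_2 ⋯ M_k has both diagonal entries at most λ^k and both off-diagonal entries at most n k λ^{k−1}; in particular every row sum of M is at most λ^k + n k λ^{k−1}. -/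
open Filter

section Aux

lemma key_spec {u v : Fin 2 → ℝ} {lam : ℝ}
    (hu0 : 0 ≤ u 0) (hu1 : 0 ≤ u 1) (hv0 : 0 ≤ v 0) (hv1 : 0 ≤ v 1)
    (h : BS.specRad (Matrix.of ![u, v]) ≤ lam) :
    u 0 ≤ lam ∧ v 1 ≤ lam ∧ u 1 * v 0 ≤ (lam - u 0) * (lam - v 1) := by
  set a := u 0 with ha'
  set b := u 1 with hb'
  set c := v 0 with hc'
  set d := v 1 with hd'
  set s : ℝ := Real.sqrt ((a - d)^2 + 4*(b*c)) with hs'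
  have hs0 : 0 ≤ s := Real.sqrt_nonneg _
  have hs2 : s^2 = (a - d)^2 + 4*(b*c) := Real.sq_sqrt (by positivity)
  have hsad : |a - d| ≤ s := by
    rw [← Real.sqrt_sq_eq_abs]
    exact Real.sqrt_le_sqrt (by nlinarith)
  obtain ⟨had1, had2⟩ := abs_le.mp hsad
  set μp : ℝ := ((a + d) + s)/2 with hμp'
  set μm : ℝ := ((a + d) - s)/2 with hμm'
  have hμpa : a ≤ μp := by simp only [hμp']; linarith
  have hμpd : d ≤ μp := by simp only [hμp']; linarith
  have hμp0 : 0 ≤ μp := le_trans hu0 hμpa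
  have hμmp : μm ≤ μp := by simp only [hμp', hμm']; linarith
  have hμmn : -μp ≤ μm := by simp only [hμp', hμm']; linarith
  have hsum : μp + μm = a + d := by simp only [hμp', hμm']; ring
  have hprod : μp * μm = a*d - b*c := by
    simp only [hμp', hμm']; linear_combination (-(1:ℝ)/4) * hs2
  set Mc := (Matrix.of ![u, v]).map (Complex.ofReal) with hMc'
  have hdet : ∀ z : ℂ, (algebraMap ℂ (Matrix (Fin 2) (Fin 2) ℂ) z - Mc).det
      = (z - (a:ℂ)) * (z - (d:ℂ)) - (b:ℂ)*(c:ℂ) := by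
    intro z
    rw [Matrix.det_fin_two]
    simp [Matrix.algebraMap_matrix_apply, Matrix.map_apply, hMc', ha', hb', hc', hd']
  have hspec : ∀ z : ℂ, z ∈ spectrum ℂ Mc ↔ (z - (a:ℂ)) * (z - (d:ℂ)) - (b:ℂ)*(c:ℂ) = 0 := by
    intro z
    rw [spectrum.mem_iff, Matrix.isUnit_iff_isUnit_det, hdet, isUnit_iff_ne_zero, not_not]
  have hmem : (μp : ℂ) ∈ spectrum ℂ Mc := by
    rw [hspec]
    have hr : (μp - a) * (μp - d) - b*c = 0 := by
      simp only [hμp']; linear_combination ((1:ℝ)/4) * hs2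
    have : ((μp:ℂ) - a) * ((μp:ℂ) - d) - (b:ℂ)*(c:ℂ)
        = (((μp - a) * (μp - d) - b*c : ℝ) : ℂ) := by push_cast; ring
    rw [this, hr, Complex.ofReal_zero]
  have hub : ∀ r ∈ {r | ∃ μ : ℂ, μ ∈ spectrum ℂ Mc ∧ r = ‖μ‖}, r ≤ μp := by
    rintro r ⟨μ, hμ, rfl⟩
    rw [hspec] at hμ
    have hfac : (μ - (μp:ℂ)) * (μ - (μm:ℂ)) = 0 := by
      have h1 : (μp : ℂ) + (μm : ℂ) = (a : ℂ) + (d : ℂ) := by exact_mod_cast congrArg Complex.ofReal hsum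
      have h2 : (μp : ℂ) * (μm : ℂ) = (a : ℂ)*(d : ℂ) - (b:ℂ)*(c:ℂ) := by
        exact_mod_cast congrArg Complex.ofReal hprod
      linear_combination hμ - μ*h1 + h2
    rcases mul_eq_zero.mp hfac with h' | h' <;> rw [sub_eq_zero] at h' <;> subst h'
    · rw [Complex.norm_real, Real.norm_eq_abs]; exact le_of_eq (abs_of_nonneg hμp0)
    · rw [Complex.norm_real, Real.norm_eq_abs]; exact abs_le.mpr ⟨by linarith, hμmp⟩
  have hle : μp ≤ lam := by
    refine le_trans (le_csSup ⟨μp, hub⟩ ?_) h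
    exact ⟨(μp : ℂ), hmem, by rw [Complex.norm_real, Real.norm_eq_abs, abs_of_nonneg hμp0]⟩
  refine ⟨le_trans hμpa hle, le_trans hμpd hle, ?_⟩
  have h1 : 0 ≤ (lam - μp) * (lam - μm) := mul_nonneg (by linarith) (by linarith)
  nlinarith [h1, hsum, hprod]


noncomputable def thetafn (p q : ℝ) : ℝ := if p + q = 0 then 0 else p / (p + q)

lemma thetafn_nonneg {p q : ℝ} (hp : 0 ≤ p) (hq : 0 ≤ q) : 0 ≤ thetafn p q := by
  unfold thetafn
  split
  · exact le_refl 0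
  · next h => exact div_nonneg hp ((add_nonneg hp hq).lt_of_ne' h).le

lemma thetafn_zero {q : ℝ} : thetafn 0 q = 0 := by
  unfold thetafn; split <;> simp

lemma thetafn_pos {p q : ℝ} (hp : 0 < p) (hq : 0 ≤ q) : 0 < thetafn p q := by
  unfold thetafn
  rw [if_neg (by positivity)]
  positivity

lemma cross_of_theta {p q p' q' r s r' s' : ℝ}
    (hp : 0 ≤ p) (hq : 0 ≤ q) (hp' : 0 ≤ p') (hq' : 0 ≤ q')
    (hr : 0 ≤ r) (hs : 0 ≤ s) (hr' : 0 ≤ r') (hs' : 0 ≤ s')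
    (h1 : thetafn p q ≤ thetafn p' q') (h2 : thetafn r s ≤ thetafn r' s')
    (h3 : p' * r' ≤ q' * s') : p * r ≤ q * s := by
  rcases eq_or_lt_of_le hp with hp0 | hp0
  · nlinarith
  rcases eq_or_lt_of_le hr with hr0 | hr0
  · nlinarith
  have hθp : 0 < thetafn p' q' := lt_of_lt_of_le (thetafn_pos hp0 hq) h1
  have hθr : 0 < thetafn r' s' := lt_of_lt_of_le (thetafn_pos hr0 hs) h2
  have hp'0 : 0 < p' := by
    by_contra hc
    have : p' = 0 := le_antisymm (not_lt.mp hc |>.trans (le_refl 0)) hp'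
    rw [this, thetafn_zero] at hθp; exact lt_irrefl 0 hθp
  have hr'0 : 0 < r' := by
    by_contra hc
    have : r' = 0 := le_antisymm (not_lt.mp hc |>.trans (le_refl 0)) hr'
    rw [this, thetafn_zero] at hθr; exact lt_irrefl 0 hθr
  have hq'0 : 0 < q' := by
    rcases eq_or_lt_of_le hq' with hq'e | h; · nlinarith
    exact h
  have hs'0 : 0 < s' := by
    rcases eq_or_lt_of_le hs' with hs'e | h; · nlinarith
    exact h
  have hd1 : 0 < p + q := by positivity
  have hd1' : 0 < p' + q' := by positivity
  have hd2 : 0 < r + s := by positivity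
  have hd2' : 0 < r' + s' := by positivity
  have e1 : p * q' ≤ p' * q := by
    have := h1
    unfold thetafn at this
    rw [if_neg (ne_of_gt hd1), if_neg (ne_of_gt hd1')] at this
    rw [div_le_div_iff₀ hd1 hd1'] at this
    nlinarith
  have e2 : r * s' ≤ r' * s := by
    have := h2
    unfold thetafn at this
    rw [if_neg (ne_of_gt hd2), if_neg (ne_of_gt hd2')] at this
    rw [div_le_div_iff₀ hd2 hd2'] at this
    nlinarith
  have key : (p * r) * (q' * s') ≤ (q * s) * (q' * s') := by
    have k1 : (p * q') * (r * s') ≤ (p' * q) * (r' * s) :=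
      mul_le_mul e1 e2 (by positivity) (by nlinarith)
    have k2 : (p' * r') * (q * s) ≤ (q' * s') * (q * s) :=
      mul_le_mul_of_nonneg_right h3 (by positivity)
    nlinarith
  exact le_of_mul_le_mul_right key (by positivity)

lemma exists_theta_min {lam : ℝ} (c : Fin 2) (e : Fin 2) (S : Set (Fin 2 → ℝ))
    (hS : IsCompact S) (hne : S.Nonempty)
    (hnn : ∀ w ∈ S, 0 ≤ w c) (hle : ∀ w ∈ S, w e ≤ lam) :
    ∃ w ∈ S, ∀ w' ∈ S, thetafn (w c) (lam - w e) ≤ thetafn (w' c) (lam - w' e) := by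
  by_cases h0 : ∃ w ∈ S, w c = 0
  · obtain ⟨w, hwS, hw⟩ := h0
    refine ⟨w, hwS, fun w' hw' => ?_⟩
    rw [hw, thetafn_zero]
    exact thetafn_nonneg (hnn w' hw') (by linarith [hle w' hw'])
  · push_neg at h0
    have hpos : ∀ w ∈ S, 0 < w c := fun w hw => (hnn w hw).lt_of_ne' (h0 w hw)
    have hcont : ContinuousOn (fun w : Fin 2 → ℝ => thetafn (w c) (lam - w e)) S := by
      intro w hw
      have hd : 0 < w c + (lam - w e) := by
        have := hpos w hw; have := hle w hw; linarith
      have hopen : IsOpen {x : Fin 2 → ℝ | 0 < x c + (lam - x e)} :=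
        isOpen_lt continuous_const (by continuity)
      have heq : (fun x : Fin 2 → ℝ => thetafn (x c) (lam - x e))
          =ᶠ[nhds w] (fun x => x c / (x c + (lam - x e))) := by
        filter_upwards [hopen.mem_nhds hd] with x hx
        exact if_neg (ne_of_gt hx)
      have hca : ContinuousAt (fun x : Fin 2 → ℝ => x c / (x c + (lam - x e))) w := by
        apply ContinuousAt.div
        · exact (continuous_apply c).continuousAt
        · exact ((continuous_apply c).add (continuous_const.sub (continuous_apply e))).continuousAt
        · exact ne_of_gt hd
      exact (hca.congr heq.symm).continuousWithinAt
    obtain ⟨w, hwS, hmin⟩ := hS.exists_isMinOn hne hcont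
    exact ⟨w, hwS, fun w' hw' => hmin hw'⟩


lemma prodP_succ (A : ℕ → Matrix (Fin 2) (Fin 2) ℝ) (m : ℕ) :
    ((List.range (m+1)).map A).prod = ((List.range m).map A).prod * A m := by
  rw [List.range_succ, List.map_append]
  simp

lemma mul_entry (P Q : Matrix (Fin 2) (Fin 2) ℝ) (i j : Fin 2) :
    (P * Q) i j = P i 0 * Q 0 j + P i 1 * Q 1 j := by
  rw [Matrix.mul_apply, Fin.sum_univ_two]

lemma invC (lam n a b : ℝ) (hl : 0 ≤ lam) (hn : 0 ≤ n) (ha : 0 ≤ a) (hb : 0 ≤ b)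
    (A : ℕ → Matrix (Fin 2) (Fin 2) ℝ) (k : ℕ)
    (hnn : ∀ i < k, ∀ s t : Fin 2, 0 ≤ A i s t)
    (hβn : ∀ i < k, A i 0 1 ≤ n) (hγn : ∀ i < k, A i 1 0 ≤ n)
    (hb1 : ∀ i < k, A i 1 0 ≤ b * (lam - A i 1 1))
    (hb2 : ∀ i < k, b * A i 0 1 ≤ lam - A i 0 0)
    (ha1 : ∀ i < k, A i 0 1 ≤ a * (lam - A i 0 0))
    (ha2 : ∀ i < k, a * A i 1 0 ≤ lam - A i 1 1)
    (hα : ∀ i < k, A i 0 0 ≤ lam) (hδ : ∀ i < k, A i 1 1 ≤ lam) :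
    ∀ m ≤ k, (∀ s t : Fin 2, 0 ≤ ((List.range m).map A).prod s t) ∧
      ((List.range m).map A).prod 0 0 + b * ((List.range m).map A).prod 0 1 ≤ lam ^ m ∧
      ((List.range m).map A).prod 1 1 + a * ((List.range m).map A).prod 1 0 ≤ lam ^ m ∧
      ((List.range m).map A).prod 0 1 ≤ n * m * lam ^ (m - 1) ∧
      ((List.range m).map A).prod 1 0 ≤ n * m * lam ^ (m - 1) := by
  intro m
  induction m with
  | zero =>
    intro _
    simp only [List.range_zero, List.map_nil, List.prod_nil]
    refine ⟨?_, ?_, ?_, ?_, ?_⟩ <;>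
      simp [Matrix.one_apply] <;> first | positivity | (intro s t; split <;> norm_num)
  | succ m ih =>
    intro hmk
    have hm : m < k := lt_of_lt_of_le (Nat.lt_succ_self m) hmk
    obtain ⟨hPnn, hI1, hI2, hI3, hI4⟩ := ih (le_of_lt hm)
    set P := ((List.range m).map A).prod with hP'
    have hps : ((List.range (m+1)).map A).prod = P * A m := prodP_succ A m
    rw [hps]
    have h00 := hPnn 0 0; have h01 := hPnn 0 1; have h10 := hPnn 1 0; have h11 := hPnn 1 1
    have hA00 := hnn m hm 0 0; have hA01 := hnn m hm 0 1
    have hA10 := hnn m hm 1 0; have hA11 := hnn m hm 1 1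
    have e00 : (P * A m) 0 0 = P 0 0 * A m 0 0 + P 0 1 * A m 1 0 := mul_entry _ _ 0 0
    have e01 : (P * A m) 0 1 = P 0 0 * A m 0 1 + P 0 1 * A m 1 1 := mul_entry _ _ 0 1
    have e10 : (P * A m) 1 0 = P 1 0 * A m 0 0 + P 1 1 * A m 1 0 := mul_entry _ _ 1 0
    have e11 : (P * A m) 1 1 = P 1 0 * A m 0 1 + P 1 1 * A m 1 1 := mul_entry _ _ 1 1
    have hP00 : P 0 0 ≤ lam ^ m := by nlinarith [mul_nonneg hb h01]
    have hP11 : P 1 1 ≤ lam ^ m := by nlinarith [mul_nonneg ha h10]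
    have hlm : (0:ℝ) ≤ lam ^ m := by positivity
    have hoff : n * (↑(m+1)) * lam ^ ((m+1) - 1) = n * lam ^ m + n * m * lam ^ m := by
      push_cast [Nat.add_sub_cancel]; ring
    have hoffold : n * ↑m * lam ^ (m - 1) * lam ≤ n * ↑m * lam ^ m := by
      rcases Nat.eq_zero_or_pos m with h | h
      · subst h; simp
      · have : m - 1 + 1 = m := Nat.succ_pred_eq_of_pos h
        rw [← this, pow_succ]; push_cast; ring_nf; exact le_refl _
    refine ⟨?_, ?_, ?_, ?_, ?_⟩
    · intro s t
      rw [mul_entry]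
      have := hPnn s 0; have := hPnn s 1
      have := hnn m hm 0 t; have := hnn m hm 1 t
      positivity
    · rw [e00, e01]
      have c1 : A m 0 0 + b * A m 0 1 ≤ lam := by linarith [hb2 m hm]
      have c2 : A m 1 0 + b * A m 1 1 ≤ b * lam := by linarith [hb1 m hm]
      calc P 0 0 * A m 0 0 + P 0 1 * A m 1 0 + b * (P 0 0 * A m 0 1 + P 0 1 * A m 1 1)
          = P 0 0 * (A m 0 0 + b * A m 0 1) + P 0 1 * (A m 1 0 + b * A m 1 1) := by ring
        _ ≤ P 0 0 * lam + P 0 1 * (b * lam) :=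
            add_le_add (mul_le_mul_of_nonneg_left c1 h00) (mul_le_mul_of_nonneg_left c2 h01)
        _ = lam * (P 0 0 + b * P 0 1) := by ring
        _ ≤ lam * lam ^ m := mul_le_mul_of_nonneg_left hI1 hl
        _ = lam ^ (m+1) := by rw [pow_succ]; ring
    · rw [e11, e10]
      have c1 : A m 1 1 + a * A m 1 0 ≤ lam := by linarith [ha2 m hm]
      have c2 : A m 0 1 + a * A m 0 0 ≤ a * lam := by linarith [ha1 m hm]
      calc P 1 0 * A m 0 1 + P 1 1 * A m 1 1 + a * (P 1 0 * A m 0 0 + P 1 1 * A m 1 0)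
          = P 1 1 * (A m 1 1 + a * A m 1 0) + P 1 0 * (A m 0 1 + a * A m 0 0) := by ring
        _ ≤ P 1 1 * lam + P 1 0 * (a * lam) :=
            add_le_add (mul_le_mul_of_nonneg_left c1 h11) (mul_le_mul_of_nonneg_left c2 h10)
        _ = lam * (P 1 1 + a * P 1 0) := by ring
        _ ≤ lam * lam ^ m := mul_le_mul_of_nonneg_left hI2 hl
        _ = lam ^ (m+1) := by rw [pow_succ]; ring
    · rw [e01, hoff]
      have t1 : P 0 0 * A m 0 1 ≤ lam ^ m * n := mul_le_mul hP00 (hβn m hm) hA01 hlm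
      have t2 : P 0 1 * A m 1 1 ≤ (n * ↑m * lam ^ (m-1)) * lam :=
        mul_le_mul hI3 (hδ m hm) hA11 (by positivity)
      linarith [t1, t2, hoffold]
    · rw [e10, hoff]
      have t1 : P 1 1 * A m 1 0 ≤ lam ^ m * n := mul_le_mul hP11 (hγn m hm) hA10 hlm
      have t2 : P 1 0 * A m 0 0 ≤ (n * ↑m * lam ^ (m-1)) * lam :=
        mul_le_mul hI4 (hα m hm) hA00 (by positivity)
      linarith [t1, t2, hoffold]

-- lower triangular case : all A i 0 1 = 0
lemma invA (lam n : ℝ) (hl : 0 ≤ lam) (hn : 0 ≤ n)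
    (A : ℕ → Matrix (Fin 2) (Fin 2) ℝ) (k : ℕ)
    (hnn : ∀ i < k, ∀ s t : Fin 2, 0 ≤ A i s t)
    (hβ : ∀ i < k, A i 0 1 = 0) (hγn : ∀ i < k, A i 1 0 ≤ n)
    (hα : ∀ i < k, A i 0 0 ≤ lam) (hδ : ∀ i < k, A i 1 1 ≤ lam) :
    ∀ m ≤ k, (∀ s t : Fin 2, 0 ≤ ((List.range m).map A).prod s t) ∧
      ((List.range m).map A).prod 0 0 ≤ lam ^ m ∧
      ((List.range m).map A).prod 1 1 ≤ lam ^ m ∧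
      ((List.range m).map A).prod 0 1 = 0 ∧
      ((List.range m).map A).prod 1 0 ≤ n * m * lam ^ (m - 1) := by
  intro m
  induction m with
  | zero =>
    intro _
    simp only [List.range_zero, List.map_nil, List.prod_nil]
    refine ⟨?_, ?_, ?_, ?_, ?_⟩ <;>
      simp [Matrix.one_apply] <;> (intro s t; split <;> norm_num)
  | succ m ih =>
    intro hmk
    have hm : m < k := lt_of_lt_of_le (Nat.lt_succ_self m) hmk
    obtain ⟨hPnn, hI1, hI2, hI3, hI4⟩ := ih (le_of_lt hm)
    set P := ((List.range m).map A).prod with hP'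
    rw [prodP_succ A m]
    have h00 := hPnn 0 0; have h10 := hPnn 1 0; have h11 := hPnn 1 1
    have hA00 := hnn m hm 0 0; have hA10 := hnn m hm 1 0; have hA11 := hnn m hm 1 1
    have e00 : (P * A m) 0 0 = P 0 0 * A m 0 0 + P 0 1 * A m 1 0 := mul_entry _ _ 0 0
    have e01 : (P * A m) 0 1 = P 0 0 * A m 0 1 + P 0 1 * A m 1 1 := mul_entry _ _ 0 1
    have e10 : (P * A m) 1 0 = P 1 0 * A m 0 0 + P 1 1 * A m 1 0 := mul_entry _ _ 1 0
    have e11 : (P * A m) 1 1 = P 1 0 * A m 0 1 + P 1 1 * A m 1 1 := mul_entry _ _ 1 1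
    have hlm : (0:ℝ) ≤ lam ^ m := by positivity
    have hoff : n * (↑(m+1)) * lam ^ ((m+1) - 1) = n * lam ^ m + n * m * lam ^ m := by
      push_cast [Nat.add_sub_cancel]; ring
    have hoffold : n * ↑m * lam ^ (m - 1) * lam ≤ n * ↑m * lam ^ m := by
      rcases Nat.eq_zero_or_pos m with h | h
      · subst h; simp
      · have h2 : m - 1 + 1 = m := Nat.succ_pred_eq_of_pos h
        rw [← h2, pow_succ]; push_cast; ring_nf; exact le_refl _
    refine ⟨?_, ?_, ?_, ?_, ?_⟩
    · intro s t
      rw [mul_entry]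
      have := hPnn s 0; have := hPnn s 1
      have := hnn m hm 0 t; have := hnn m hm 1 t
      positivity
    · rw [e00, hI3]
      have : P 0 0 * A m 0 0 ≤ lam ^ m * lam := mul_le_mul hI1 (hα m hm) hA00 hlm
      rw [pow_succ]; linarith
    · rw [e11, hβ m hm]
      have : P 1 1 * A m 1 1 ≤ lam ^ m * lam := mul_le_mul hI2 (hδ m hm) hA11 hlm
      rw [pow_succ]; nlinarith
    · rw [e01, hI3, hβ m hm]; ring
    · rw [e10, hoff]
      have t1 : P 1 1 * A m 1 0 ≤ lam ^ m * n := mul_le_mul hI2 (hγn m hm) hA10 hlm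
      have t2 : P 1 0 * A m 0 0 ≤ (n * ↑m * lam ^ (m-1)) * lam :=
        mul_le_mul hI4 (hα m hm) hA00 (by positivity)
      linarith [t1, t2, hoffold]

-- upper triangular case : all A i 1 0 = 0
lemma invB (lam n : ℝ) (hl : 0 ≤ lam) (hn : 0 ≤ n)
    (A : ℕ → Matrix (Fin 2) (Fin 2) ℝ) (k : ℕ)
    (hnn : ∀ i < k, ∀ s t : Fin 2, 0 ≤ A i s t)
    (hγ : ∀ i < k, A i 1 0 = 0) (hβn : ∀ i < k, A i 0 1 ≤ n)
    (hα : ∀ i < k, A i 0 0 ≤ lam) (hδ : ∀ i < k, A i 1 1 ≤ lam) :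
    ∀ m ≤ k, (∀ s t : Fin 2, 0 ≤ ((List.range m).map A).prod s t) ∧
      ((List.range m).map A).prod 0 0 ≤ lam ^ m ∧
      ((List.range m).map A).prod 1 1 ≤ lam ^ m ∧
      ((List.range m).map A).prod 1 0 = 0 ∧
      ((List.range m).map A).prod 0 1 ≤ n * m * lam ^ (m - 1) := by
  intro m
  induction m with
  | zero =>
    intro _
    simp only [List.range_zero, List.map_nil, List.prod_nil]
    refine ⟨?_, ?_, ?_, ?_, ?_⟩ <;>
      simp [Matrix.one_apply] <;> (intro s t; split <;> norm_num)
  | succ m ih =>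
    intro hmk
    have hm : m < k := lt_of_lt_of_le (Nat.lt_succ_self m) hmk
    obtain ⟨hPnn, hI1, hI2, hI3, hI4⟩ := ih (le_of_lt hm)
    set P := ((List.range m).map A).prod with hP'
    rw [prodP_succ A m]
    have h00 := hPnn 0 0; have h01 := hPnn 0 1; have h11 := hPnn 1 1
    have hA00 := hnn m hm 0 0; have hA01 := hnn m hm 0 1; have hA11 := hnn m hm 1 1
    have e00 : (P * A m) 0 0 = P 0 0 * A m 0 0 + P 0 1 * A m 1 0 := mul_entry _ _ 0 0
    have e01 : (P * A m) 0 1 = P 0 0 * A m 0 1 + P 0 1 * A m 1 1 := mul_entry _ _ 0 1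
    have e10 : (P * A m) 1 0 = P 1 0 * A m 0 0 + P 1 1 * A m 1 0 := mul_entry _ _ 1 0
    have e11 : (P * A m) 1 1 = P 1 0 * A m 0 1 + P 1 1 * A m 1 1 := mul_entry _ _ 1 1
    have hlm : (0:ℝ) ≤ lam ^ m := by positivity
    have hoff : n * (↑(m+1)) * lam ^ ((m+1) - 1) = n * lam ^ m + n * m * lam ^ m := by
      push_cast [Nat.add_sub_cancel]; ring
    have hoffold : n * ↑m * lam ^ (m - 1) * lam ≤ n * ↑m * lam ^ m := by
      rcases Nat.eq_zero_or_pos m with h | h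
      · subst h; simp
      · have h2 : m - 1 + 1 = m := Nat.succ_pred_eq_of_pos h
        rw [← h2, pow_succ]; push_cast; ring_nf; exact le_refl _
    refine ⟨?_, ?_, ?_, ?_, ?_⟩
    · intro s t
      rw [mul_entry]
      have := hPnn s 0; have := hPnn s 1
      have := hnn m hm 0 t; have := hnn m hm 1 t
      positivity
    · rw [e00, hγ m hm]
      have : P 0 0 * A m 0 0 ≤ lam ^ m * lam := mul_le_mul hI1 (hα m hm) hA00 hlm
      rw [pow_succ]; nlinarith
    · rw [e11, hI3]
      have : P 1 1 * A m 1 1 ≤ lam ^ m * lam := mul_le_mul hI2 (hδ m hm) hA11 hlm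
      rw [pow_succ]; linarith
    · rw [e10, hI3, hγ m hm]; ring
    · rw [e01, hoff]
      have t1 : P 0 0 * A m 0 1 ≤ lam ^ m * n := mul_le_mul hI1 (hβn m hm) hA01 hlm
      have t2 : P 0 1 * A m 1 1 ≤ (n * ↑m * lam ^ (m-1)) * lam :=
        mul_le_mul hI4 (hδ m hm) hA11 (by positivity)
      linarith [t1, t2, hoffold]

end Aux

open BS in
/-- Under the hypotheses of the previous lemma, and assuming in
addition that every coordinate of every vector in the `U i` and `V i` is at most
`n`, one can choose `u i ∈ U i` and `v i ∈ V i` so that, with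
`M := [u 0; v 0] * ⋯ * [u (k-1); v (k-1)]`, both diagonal entries of `M` are at most
`lam ^ k`, both off-diagonal entries are at most `n * k * lam ^ (k-1)`, and so every
row sum of `M` is at most `lam ^ k + n * k * lam ^ (k-1)`. -/
theorem prod_entries_le (k : ℕ) (n : ℝ) (U V : ℕ → Set (Fin 2 → ℝ)) (lam : ℝ)
    (hlam : 0 ≤ lam)
    (hUc : ∀ i < k, IsCompact (U i)) (hVc : ∀ i < k, IsCompact (V i))
    (hUnn : ∀ i < k, ∀ u ∈ U i, ∀ t, 0 ≤ u t)
    (hVnn : ∀ i < k, ∀ v ∈ V i, ∀ t, 0 ≤ v t)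
    (hUbd : ∀ i < k, ∀ u ∈ U i, ∀ t, u t ≤ n)
    (hVbd : ∀ i < k, ∀ v ∈ V i, ∀ t, v t ≤ n)
    (hmix : ∀ i < k, ∀ j < k, ∃ u ∈ U i, ∃ v ∈ V j,
      specRad (Matrix.of ![u, v]) ≤ lam) :
    ∃ u v : ℕ → (Fin 2 → ℝ), (∀ i < k, u i ∈ U i) ∧ (∀ i < k, v i ∈ V i) ∧
      ∀ M : Matrix (Fin 2) (Fin 2) ℝ,
        M = (List.ofFn (fun t : Fin k => Matrix.of ![u (t : ℕ), v (t : ℕ)])).prod →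
          M 0 0 ≤ lam ^ k ∧ M 1 1 ≤ lam ^ k ∧
          M 0 1 ≤ n * k * lam ^ (k - 1) ∧ M 1 0 ≤ n * k * lam ^ (k - 1) ∧
          ∀ s : Fin 2, M s 0 + M s 1 ≤ lam ^ k + n * k * lam ^ (k - 1) := by
  rcases Nat.eq_zero_or_pos k with hk0 | hkpos
  · subst hk0
    refine ⟨fun _ => 0, fun _ => 0, by omega, by omega, ?_⟩
    intro M hM
    rw [List.ofFn_zero, List.prod_nil] at hM
    subst hM
    norm_num [Matrix.one_apply]
  -- k ≥ 1
  obtain ⟨u₀, hu₀, -⟩ := hmix 0 hkpos 0 hkpos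
  have hn : 0 ≤ n := le_trans (hUnn 0 hkpos u₀ hu₀ 0) (hUbd 0 hkpos u₀ hu₀ 0)
  -- selection of u
  have hSelU : ∀ i, ∃ w, i < k → w ∈ U i ∧ w 0 ≤ lam ∧
      ∀ w' ∈ U i, w' 0 ≤ lam → thetafn (w 1) (lam - w 0) ≤ thetafn (w' 1) (lam - w' 0) := by
    intro i
    by_cases hi : i < k
    · have hcomp : IsCompact (U i ∩ {w | w 0 ≤ lam}) :=
        (hUc i hi).inter_right (isClosed_le (continuous_apply 0) continuous_const)
      have hne : (U i ∩ {w | w 0 ≤ lam}).Nonempty := by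
        obtain ⟨u', hu', v', hv', hsp⟩ := hmix i hi i hi
        exact ⟨u', hu', (key_spec (hUnn i hi u' hu' 0) (hUnn i hi u' hu' 1)
          (hVnn i hi v' hv' 0) (hVnn i hi v' hv' 1) hsp).1⟩
      obtain ⟨w, hwS, hmin⟩ := exists_theta_min 1 0 (U i ∩ {w | w 0 ≤ lam}) hcomp hne
        (fun w hw => hUnn i hi w hw.1 1) (fun w hw => hw.2)
      exact ⟨w, fun _ => ⟨hwS.1, hwS.2, fun w' h1 h2 => hmin w' ⟨h1, h2⟩⟩⟩
    · exact ⟨0, fun h => absurd h hi⟩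
  have hSelV : ∀ j, ∃ w, j < k → w ∈ V j ∧ w 1 ≤ lam ∧
      ∀ w' ∈ V j, w' 1 ≤ lam → thetafn (w 0) (lam - w 1) ≤ thetafn (w' 0) (lam - w' 1) := by
    intro j
    by_cases hj : j < k
    · have hcomp : IsCompact (V j ∩ {w | w 1 ≤ lam}) :=
        (hVc j hj).inter_right (isClosed_le (continuous_apply 1) continuous_const)
      have hne : (V j ∩ {w | w 1 ≤ lam}).Nonempty := by
        obtain ⟨u', hu', v', hv', hsp⟩ := hmix j hj j hj
        exact ⟨v', hv', (key_spec (hUnn j hj u' hu' 0) (hUnn j hj u' hu' 1)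
          (hVnn j hj v' hv' 0) (hVnn j hj v' hv' 1) hsp).2.1⟩
      obtain ⟨w, hwS, hmin⟩ := exists_theta_min 0 1 (V j ∩ {w | w 1 ≤ lam}) hcomp hne
        (fun w hw => hVnn j hj w hw.1 0) (fun w hw => hw.2)
      exact ⟨w, fun _ => ⟨hwS.1, hwS.2, fun w' h1 h2 => hmin w' ⟨h1, h2⟩⟩⟩
    · exact ⟨0, fun h => absurd h hj⟩
  choose u hu using hSelU
  choose v hv using hSelV
  have hcross : ∀ i < k, ∀ j < k, u i 1 * v j 0 ≤ (lam - u i 0) * (lam - v j 1) := by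
    intro i hi j hj
    obtain ⟨u', hu', v', hv', hsp⟩ := hmix i hi j hj
    obtain ⟨hu'0, hv'1, hcr⟩ := key_spec (hUnn i hi u' hu' 0) (hUnn i hi u' hu' 1)
      (hVnn j hj v' hv' 0) (hVnn j hj v' hv' 1) hsp
    obtain ⟨huU, hu0, humin⟩ := hu i hi
    obtain ⟨hvV, hv1, hvmin⟩ := hv j hj
    exact cross_of_theta (hUnn i hi _ huU 1) (by linarith) (hUnn i hi u' hu' 1) (by linarith)
      (hVnn j hj _ hvV 0) (by linarith) (hVnn j hj v' hv' 0) (by linarith)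
      (humin u' hu' hu'0) (hvmin v' hv' hv'1) hcr
  set A : ℕ → Matrix (Fin 2) (Fin 2) ℝ := fun t => Matrix.of ![u t, v t] with hA'
  have eA0 : ∀ t (j : Fin 2), A t 0 j = u t j := fun t j => rfl
  have eA1 : ∀ t (j : Fin 2), A t 1 j = v t j := fun t j => rfl
  have hnnA : ∀ i < k, ∀ s t : Fin 2, 0 ≤ A i s t := by
    intro i hi s t
    fin_cases s
    · exact hUnn i hi _ (hu i hi).1 t
    · exact hVnn i hi _ (hv i hi).1 t
  have hαA : ∀ i < k, A i 0 0 ≤ lam := fun i hi => (eA0 i 0) ▸ (hu i hi).2.1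
  have hδA : ∀ i < k, A i 1 1 ≤ lam := fun i hi => (eA1 i 1) ▸ (hv i hi).2.1
  have hβnA : ∀ i < k, A i 0 1 ≤ n := fun i hi => (eA0 i 1) ▸ hUbd i hi _ (hu i hi).1 1
  have hγnA : ∀ i < k, A i 1 0 ≤ n := fun i hi => (eA1 i 0) ▸ hVbd i hi _ (hv i hi).1 0
  -- main bounds on the product
  have hbounds : ((List.range k).map A).prod 0 0 ≤ lam ^ k ∧
      ((List.range k).map A).prod 1 1 ≤ lam ^ k ∧
      ((List.range k).map A).prod 0 1 ≤ n * k * lam ^ (k - 1) ∧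
      ((List.range k).map A).prod 1 0 ≤ n * k * lam ^ (k - 1) := by
    have hnk : (0:ℝ) ≤ n * k * lam ^ (k-1) := by positivity
    by_cases hcaseA : ∀ i < k, u i 1 = 0
    · obtain ⟨hPnn, h1, h2, h3, h4⟩ := invA lam n hlam hn A k hnnA
        (fun i hi => (eA0 i 1).trans (hcaseA i hi)) hγnA hαA hδA k le_rfl
      exact ⟨h1, h2, by rw [h3]; exact hnk, h4⟩
    by_cases hcaseB : ∀ j < k, v j 0 = 0
    · obtain ⟨hPnn, h1, h2, h3, h4⟩ := invB lam n hlam hn A k hnnA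
        (fun j hj => (eA1 j 0).trans (hcaseB j hj)) hβnA hαA hδA k le_rfl
      exact ⟨h1, h2, h4, by rw [h3]; exact hnk⟩
    push_neg at hcaseA hcaseB
    obtain ⟨i₀, hi₀, hui₀'⟩ := hcaseA
    obtain ⟨j₀, hj₀, hvj₀'⟩ := hcaseB
    have hui₀ : 0 < u i₀ 1 := (hUnn i₀ hi₀ _ (hu i₀ hi₀).1 1).lt_of_ne' hui₀'
    have hvj₀ : 0 < v j₀ 0 := (hVnn j₀ hj₀ _ (hv j₀ hj₀).1 0).lt_of_ne' hvj₀'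
    have hrne : (Finset.range k).Nonempty := Finset.nonempty_range_iff.mpr (by omega)
    set g : ℕ → ℝ := fun j => if lam - v j 1 = 0 then 0 else v j 0 / (lam - v j 1) with hg'
    set f : ℕ → ℝ := fun i => if lam - u i 0 = 0 then 0 else u i 1 / (lam - u i 0) with hf'
    have hgnn : ∀ j < k, 0 ≤ g j := by
      intro j hj
      by_cases h : lam - v j 1 = 0
      · simp [hg', h]
      · have h1 : 0 ≤ lam - v j 1 := by have := (hv j hj).2.1; linarith
        simp only [hg', if_neg h]
        exact div_nonneg (hVnn j hj _ (hv j hj).1 0) h1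
    have hfnn : ∀ i < k, 0 ≤ f i := by
      intro i hi
      by_cases h : lam - u i 0 = 0
      · simp [hf', h]
      · have h1 : 0 ≤ lam - u i 0 := by have := (hu i hi).2.1; linarith
        simp only [hf', if_neg h]
        exact div_nonneg (hUnn i hi _ (hu i hi).1 1) h1
    set b : ℝ := (Finset.range k).sup' hrne g with hbdef
    set a : ℝ := (Finset.range k).sup' hrne f with hadef
    have hb0 : 0 ≤ b := le_trans (hgnn j₀ hj₀) (Finset.le_sup' g (Finset.mem_range.mpr hj₀))
    have ha0 : 0 ≤ a := le_trans (hfnn i₀ hi₀) (Finset.le_sup' f (Finset.mem_range.mpr hi₀))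
    have hb1 : ∀ j < k, v j 0 ≤ b * (lam - v j 1) := by
      intro j hj
      by_cases hz : lam - v j 1 = 0
      · have h0 : v j 0 = 0 := by
          have := hcross i₀ hi₀ j hj
          rw [hz, mul_zero] at this
          nlinarith [hVnn j hj _ (hv j hj).1 0]
        rw [h0, hz, mul_zero]
      · have hs : 0 < lam - v j 1 := by
          have := (hv j hj).2.1; rcases lt_or_eq_of_le (by linarith : (0:ℝ) ≤ lam - v j 1) with h|h
          · exact h
          · exact absurd h.symm hz
        have : g j ≤ b := Finset.le_sup' g (Finset.mem_range.mpr hj)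
        rw [hg'] at this
        simp only [if_neg hz] at this
        calc v j 0 = (v j 0 / (lam - v j 1)) * (lam - v j 1) := by field_simp
          _ ≤ b * (lam - v j 1) := mul_le_mul_of_nonneg_right this hs.le
    have ha1 : ∀ i < k, u i 1 ≤ a * (lam - u i 0) := by
      intro i hi
      by_cases hz : lam - u i 0 = 0
      · have h0 : u i 1 = 0 := by
          have := hcross i hi j₀ hj₀
          rw [hz, zero_mul] at this
          nlinarith [hUnn i hi _ (hu i hi).1 1]
        rw [h0, hz, mul_zero]
      · have hs : 0 < lam - u i 0 := by
          have := (hu i hi).2.1; rcases lt_or_eq_of_le (by linarith : (0:ℝ) ≤ lam - u i 0) with h|h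
          · exact h
          · exact absurd h.symm hz
        have : f i ≤ a := Finset.le_sup' f (Finset.mem_range.mpr hi)
        rw [hf'] at this
        simp only [if_neg hz] at this
        calc u i 1 = (u i 1 / (lam - u i 0)) * (lam - u i 0) := by field_simp
          _ ≤ a * (lam - u i 0) := mul_le_mul_of_nonneg_right this hs.le
    have hb2 : ∀ i < k, b * u i 1 ≤ lam - u i 0 := by
      intro i hi
      obtain ⟨J, hJ, hgJ⟩ := Finset.exists_mem_eq_sup' hrne g
      rw [Finset.mem_range] at hJ
      rw [← hbdef] at hgJ
      by_cases hui : u i 1 = 0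
      · rw [hui, mul_zero]; have := (hu i hi).2.1; linarith
      have huipos : 0 < u i 1 := (hUnn i hi _ (hu i hi).1 1).lt_of_ne' hui
      by_cases hzJ : lam - v J 1 = 0
      · rw [hgJ, hg']; simp only [if_pos hzJ, zero_mul]
        have := (hu i hi).2.1; linarith
      · have hsJ : 0 < lam - v J 1 := by
          have := (hv J hJ).2.1; rcases lt_or_eq_of_le (by linarith : (0:ℝ) ≤ lam - v J 1) with h|h
          · exact h
          · exact absurd h.symm hzJ
        rw [hgJ, hg']; simp only [if_neg hzJ]
        rw [div_mul_eq_mul_div, div_le_iff₀ hsJ]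
        have := hcross i hi J hJ
        nlinarith
    have ha2 : ∀ j < k, a * v j 0 ≤ lam - v j 1 := by
      intro j hj
      obtain ⟨J, hJ, hfJ⟩ := Finset.exists_mem_eq_sup' hrne f
      rw [Finset.mem_range] at hJ
      rw [← hadef] at hfJ
      by_cases hvj : v j 0 = 0
      · rw [hvj, mul_zero]; have := (hv j hj).2.1; linarith
      have hvjpos : 0 < v j 0 := (hVnn j hj _ (hv j hj).1 0).lt_of_ne' hvj
      by_cases hzJ : lam - u J 0 = 0
      · rw [hfJ, hf']; simp only [if_pos hzJ, zero_mul]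
        have := (hv j hj).2.1; linarith
      · have hsJ : 0 < lam - u J 0 := by
          have := (hu J hJ).2.1; rcases lt_or_eq_of_le (by linarith : (0:ℝ) ≤ lam - u J 0) with h|h
          · exact h
          · exact absurd h.symm hzJ
        rw [hfJ, hf']; simp only [if_neg hzJ]
        rw [div_mul_eq_mul_div, div_le_iff₀ hsJ]
        have := hcross J hJ j hj
        nlinarith
    obtain ⟨hPnn, h1, h2, h3, h4⟩ := invC lam n a b hlam hn ha0 hb0 A k hnnA hβnA hγnA
      (fun i hi => by rw [eA1, eA1]; exact hb1 i hi)
      (fun i hi => by rw [eA0, eA0]; exact hb2 i hi)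
      (fun i hi => by rw [eA0, eA0]; exact ha1 i hi)
      (fun i hi => by rw [eA1, eA1]; exact ha2 i hi)
      hαA hδA k le_rfl
    refine ⟨?_, ?_, h3, h4⟩
    · nlinarith [mul_nonneg hb0 (hPnn 0 1)]
    · nlinarith [mul_nonneg ha0 (hPnn 1 0)]
  refine ⟨u, v, fun i hi => (hu i hi).1, fun i hi => (hv i hi).1, ?_⟩
  intro M hMeq
  have hMP : M = ((List.range k).map A).prod := by
    rw [hMeq, List.ofFn_eq_map, ← List.map_coe_finRange_eq_range, List.map_map]
    rfl
  obtain ⟨h1, h2, h3, h4⟩ := hbounds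
  rw [hMP]
  refine ⟨h1, h2, h3, h4, fun s => ?_⟩
  fin_cases s
  · show ((List.range k).map A).prod 0 0 + ((List.range k).map A).prod 0 1 ≤ _
    linarith
  · show ((List.range k).map A).prod 1 0 + ((List.range k).map A).prod 1 1 ≤ _
    linarith
end

section
/- Let g_1 and g_2 be non-constant boolean functions and let G := g_1 ∘ g_2 be their composition. Then for each b ∈ {0,1}, bs_b(G) ≥ bs^M_b(g_1), where M := min{bs_0(g_2), bs_1(g_2)}. -/
open Filter

section Aux
open BS
variable {I : Type*} [Fintype I] [DecidableEq I] {f : (I → Bool) → Bool} {x : I → Bool}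

set_option linter.unusedSectionVars false

lemma BSaux.isBlock_nonempty {B : Finset I} (h : IsBlock f x B) : B.Nonempty := by
  by_contra hne
  apply h
  have hB : flipSet x B = x := by
    funext i
    have hi : i ∉ B := fun hi => hne ⟨i, hi⟩
    simp [flipSet, hi]
  rw [hB]

lemma BSaux.mem_bsAt_le_card {k : ℕ}
    (h : k ∈ {k | ∃ B : Fin k → Finset I, (∀ t, IsBlock f x (B t)) ∧
      ∀ t t', t ≠ t' → Disjoint (B t) (B t')}) : k ≤ Fintype.card I := by
  obtain ⟨B, hB, hD⟩ := h
  have hne : ∀ t : Fin k, ∃ i, i ∈ B t := fun t => BSaux.isBlock_nonempty (hB t)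
  choose e he using hne
  have hinj : Function.Injective e := by
    intro t t' h
    by_contra hne'
    exact (Finset.disjoint_left.mp (hD t t' hne') (he t)) (h ▸ he t')
  simpa using Fintype.card_le_of_injective e hinj

lemma BSaux.bsAt_bdd :
    BddAbove {k | ∃ B : Fin k → Finset I, (∀ t, IsBlock f x (B t)) ∧
      ∀ t t', t ≠ t' → Disjoint (B t) (B t')} :=
  ⟨Fintype.card I, fun _ hk => BSaux.mem_bsAt_le_card hk⟩

lemma BSaux.zero_mem_bsAt :
    0 ∈ {k | ∃ B : Fin k → Finset I, (∀ t, IsBlock f x (B t)) ∧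
      ∀ t t', t ≠ t' → Disjoint (B t) (B t')} :=
  ⟨Fin.elim0, fun t => t.elim0, fun t => t.elim0⟩

lemma BSaux.bsAt_spec (f : (I → Bool) → Bool) (x : I → Bool) :
    ∃ B : Fin (bsAt f x) → Finset I, (∀ t, IsBlock f x (B t)) ∧
      ∀ t t', t ≠ t' → Disjoint (B t) (B t') :=
  Nat.sSup_mem ⟨0, BSaux.zero_mem_bsAt⟩ BSaux.bsAt_bdd

lemma BSaux.le_bsAt {k : ℕ}
    (h : k ∈ {k | ∃ B : Fin k → Finset I, (∀ t, IsBlock f x (B t)) ∧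
      ∀ t t', t ≠ t' → Disjoint (B t) (B t')}) : k ≤ bsAt f x :=
  le_csSup BSaux.bsAt_bdd h

lemma BSaux.bsAt_le_card : bsAt f x ≤ Fintype.card I := by
  rw [bsAt]
  exact csSup_le ⟨0, BSaux.zero_mem_bsAt⟩ fun _ hk => BSaux.mem_bsAt_le_card hk

lemma BSaux.bsb_bdd {b : Bool} :
    BddAbove {k | ∃ x, f x = b ∧ k = bsAt f x} := by
  refine ⟨Fintype.card I, ?_⟩
  rintro k ⟨x, -, rfl⟩
  exact BSaux.bsAt_le_card

lemma BSaux.bsAt_le_bsb {b : Bool} (h : f x = b) : bsAt f x ≤ bsb f b := by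
  rw [bsb]
  exact le_csSup BSaux.bsb_bdd ⟨x, h, rfl⟩

lemma BSaux.bsb_spec {b : Bool} (hb : ∃ x, f x = b) :
    ∃ x, f x = b ∧ bsb f b = bsAt f x := by
  obtain ⟨x, hx⟩ := hb
  have := Nat.sSup_mem (s := {k | ∃ x, f x = b ∧ k = bsAt f x})
    ⟨bsAt f x, x, hx, rfl⟩ BSaux.bsb_bdd
  rw [bsb]
  exact this

lemma BSaux.one_le_bsb {b : Bool} (hb : ∃ x, f x = b) (hnb : ∃ y, f y = !b) :
    1 ≤ bsb f b := by
  obtain ⟨x, hx⟩ := hb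
  obtain ⟨y, hy⟩ := hnb
  have hblock : IsBlock f x (Finset.univ.filter (fun i => x i ≠ y i)) := by
    have hfy : flipSet x (Finset.univ.filter (fun i => x i ≠ y i)) = y := by
      funext i
      simp only [flipSet, Finset.mem_filter, Finset.mem_univ, true_and]
      by_cases h : x i = y i
      · simp [h]
      · simp only [h, if_pos, ne_eq, not_false_iff, if_true]
        cases hxi : x i <;> cases hyi : y i <;> simp_all
    rw [IsBlock, hfy, hx, hy]
    simp
  have h1 : 1 ≤ bsAt f x :=
    BSaux.le_bsAt ⟨fun _ => Finset.univ.filter (fun i => x i ≠ y i), fun _ => hblock,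
      fun t t' h => absurd (Subsingleton.elim t t') h⟩
  exact h1.trans (BSaux.bsAt_le_bsb hx)

lemma BSaux.bsMAt_bdd {M : ℕ} :
    BddAbove {k | ∃ B : Fin k → Finset I, (∀ t, IsBlock f x (B t)) ∧
      ∀ i : I, (Finset.univ.filter (fun t => i ∈ B t)).card ≤ M} := by
  refine ⟨Fintype.card I * M, ?_⟩
  rintro k ⟨B, hB, hM⟩
  have h1 : ∀ t : Fin k, 1 ≤ (B t).card := fun t =>
    Finset.card_pos.mpr (BSaux.isBlock_nonempty (hB t))
  calc k = ∑ _t : Fin k, 1 := by simp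
    _ ≤ ∑ t : Fin k, (B t).card := Finset.sum_le_sum fun t _ => h1 t
    _ = ∑ t : Fin k, ∑ i : I, (if i ∈ B t then 1 else 0) := by
        refine Finset.sum_congr rfl fun t _ => ?_
        rw [← Finset.card_filter]
        congr 1
        ext i; simp
    _ = ∑ i : I, ∑ t : Fin k, (if i ∈ B t then 1 else 0) := Finset.sum_comm
    _ = ∑ i : I, (Finset.univ.filter (fun t => i ∈ B t)).card := by
        refine Finset.sum_congr rfl fun i _ => ?_
        rw [Finset.card_filter]
    _ ≤ ∑ _i : I, M := Finset.sum_le_sum fun i _ => hM i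
    _ = Fintype.card I * M := by
        rw [Finset.sum_const, smul_eq_mul, Finset.card_univ]

lemma BSaux.bsMAt_spec (f : (I → Bool) → Bool) (M : ℕ) (x : I → Bool) :
    ∃ B : Fin (bsMAt f M x) → Finset I, (∀ t, IsBlock f x (B t)) ∧
      ∀ i : I, (Finset.univ.filter (fun t => i ∈ B t)).card ≤ M := by
  have h0 : 0 ∈ {k | ∃ B : Fin k → Finset I, (∀ t, IsBlock f x (B t)) ∧
      ∀ i : I, (Finset.univ.filter (fun t => i ∈ B t)).card ≤ M} :=
    ⟨Fin.elim0, fun t => t.elim0, fun i => by simp⟩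
  have := Nat.sSup_mem ⟨0, h0⟩ BSaux.bsMAt_bdd
  rw [bsMAt]
  exact this

end Aux


open BS in
/-- Let `g₁` and `g₂` be non-constant boolean functions and
`G := g₁ ∘ g₂` their composition.  Then for each `b`,
`bs_b(G) ≥ bs^M_b(g₁)` where `M = min{bs_0(g₂), bs_1(g₂)}`. -/
theorem bs_comp_ge_bsM {n m : ℕ}
    (g₁ : (Fin n → Bool) → Bool) (g₂ : (Fin m → Bool) → Bool)
    (h1f : ∃ x, g₁ x = false) (h1t : ∃ x, g₁ x = true)
    (h2f : ∃ x, g₂ x = false) (h2t : ∃ x, g₂ x = true)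
    (b : Bool) :
    bsMb g₁ (min (bsb g₂ false) (bsb g₂ true)) b ≤ bsb (comp g₁ g₂) b := by
  set M := min (bsb g₂ false) (bsb g₂ true) with hMdef
  have hM1 : 1 ≤ M := le_min
    (BSaux.one_le_bsb h2f (by simpa using h2t))
    (BSaux.one_le_bsb h2t (by simpa using h2f))
  obtain ⟨x₀, hx₀⟩ : ∃ x, g₁ x = b := by cases b; exacts [h1f, h1t]
  rw [bsMb]
  refine csSup_le ⟨bsMAt g₁ M x₀, x₀, hx₀, rfl⟩ ?_
  rintro k ⟨x, hx, rfl⟩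
  obtain ⟨B, hB, hmult⟩ := BSaux.bsMAt_spec g₁ M x
  -- points and blocks of g₂
  have hpt : ∀ i : Fin n, ∃ pp : Fin m → Bool, g₂ pp = x i ∧
      ∃ C : Fin M → Finset (Fin m), (∀ s, IsBlock g₂ pp (C s)) ∧
        ∀ s s', s ≠ s' → Disjoint (C s) (C s') := by
    intro i
    obtain ⟨pp, hpp, hbs⟩ := BSaux.bsb_spec (f := g₂) (b := x i)
      (by cases hxi : x i; exacts [h2f, h2t])
    have hMle : M ≤ bsAt g₂ pp := by
      rw [← hbs, hMdef]
      cases x i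
      · exact min_le_left _ _
      · exact min_le_right _ _
    obtain ⟨C', hC', hCd'⟩ := BSaux.bsAt_spec g₂ pp
    refine ⟨pp, hpp, fun s => C' (Fin.castLE hMle s), fun s => hC' _, fun s s' hss => ?_⟩
    refine hCd' _ _ fun h => hss ?_
    exact Fin.ext (by simpa [Fin.ext_iff] using h)
  choose p hp C hC hCd using hpt
  -- slot assignment
  have hslot : ∀ i : Fin n, ∃ σ : Fin (bsMAt g₁ M x) → Fin M,
      ∀ t t', i ∈ B t → i ∈ B t' → σ t = σ t' → t = t' := by
    intro i
    refine ⟨fun t => if h : t ∈ Finset.univ.filter (fun t => i ∈ B t) then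
        Fin.castLE (hmult i)
          (((Finset.univ.filter (fun t => i ∈ B t)).orderIsoOfFin rfl).symm ⟨t, h⟩)
      else ⟨0, hM1⟩, ?_⟩
    intro t t' ht ht' hee
    have ht1 : t ∈ Finset.univ.filter (fun t => i ∈ B t) := by simp [ht]
    have ht1' : t' ∈ Finset.univ.filter (fun t => i ∈ B t) := by simp [ht']
    simp only [dif_pos ht1, dif_pos ht1'] at hee
    have h2 := ((Finset.univ.filter (fun t => i ∈ B t)).orderIsoOfFin rfl).symm.injective
      (Fin.castLE_injective _ hee)
    exact congrArg Subtype.val h2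
  choose σ hσ using hslot
  set z : Fin n × Fin m → Bool := fun q => p q.1 q.2 with hzdef
  have hinner : (fun i => g₂ (fun j => z (i, j))) = x := funext fun i => hp i
  have hz : comp g₁ g₂ z = b := by
    show g₁ (fun i => g₂ (fun j => z (i, j))) = b
    rw [hinner, hx]
  set D : Fin (bsMAt g₁ M x) → Finset (Fin n × Fin m) :=
    fun t => Finset.univ.filter (fun q => q.1 ∈ B t ∧ q.2 ∈ C q.1 (σ q.1 t)) with hDdef
  have hmemD : ∀ t (q : Fin n × Fin m),
      q ∈ D t ↔ q.1 ∈ B t ∧ q.2 ∈ C q.1 (σ q.1 t) := by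
    intro t q; simp [hDdef]
  have hkey : ∀ t, (fun i => g₂ (fun j => flipSet z (D t) (i, j))) = flipSet x (B t) := by
    intro t
    funext i
    show g₂ (fun j => flipSet z (D t) (i, j)) = flipSet x (B t) i
    by_cases hi : i ∈ B t
    · have hr : (fun j => flipSet z (D t) (i, j)) = flipSet (p i) (C i (σ i t)) := by
        funext j
        have hm := hmemD t (i, j)
        by_cases hj : j ∈ C i (σ i t)
        · have : (i, j) ∈ D t := hm.mpr ⟨hi, hj⟩
          simp [flipSet, this, hj, hzdef]
        · have : (i, j) ∉ D t := fun h => hj (hm.mp h).2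
          simp [flipSet, this, hj, hzdef]
      rw [hr]
      have hne := hC i (σ i t)
      have hv : g₂ (flipSet (p i) (C i (σ i t))) = !(x i) := by
        rw [IsBlock, hp i] at hne
        cases h' : g₂ (flipSet (p i) (C i (σ i t))) <;> cases h'' : x i <;> simp_all
      rw [hv, flipSet, if_pos hi]
    · have hr : (fun j => flipSet z (D t) (i, j)) = p i := by
        funext j
        have : (i, j) ∉ D t := fun h => hi ((hmemD t (i, j)).mp h).1
        simp [flipSet, this, hzdef]
      rw [hr, hp i, flipSet, if_neg hi]
  have hblocks : ∀ t, IsBlock (comp g₁ g₂) z (D t) := by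
    intro t
    show g₁ (fun i => g₂ (fun j => flipSet z (D t) (i, j))) ≠
      g₁ (fun i => g₂ (fun j => z (i, j)))
    rw [hkey t, hinner]
    exact hB t
  have hDdisj : ∀ t t', t ≠ t' → Disjoint (D t) (D t') := by
    intro t t' htt
    rw [Finset.disjoint_left]
    intro q hq hq'
    obtain ⟨h1, h2⟩ := (hmemD t q).mp hq
    obtain ⟨h1', h2'⟩ := (hmemD t' q).mp hq'
    by_cases hs : σ q.1 t = σ q.1 t'
    · exact htt (hσ q.1 t t' h1 h1' hs)
    · exact Finset.disjoint_left.mp (hCd q.1 _ _ hs) h2 h2'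
  have hle : bsMAt g₁ M x ≤ bsAt (comp g₁ g₂) z :=
    BSaux.le_bsAt ⟨D, hblocks, hDdisj⟩
  exact hle.trans (BSaux.bsAt_le_bsb hz)
end
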